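/- arXiv:1002.2486 — 4 statements merged into one kernel-verified Lean document; each statement's English description precedes it below -/
import Mathlib

section
/- Assume ‖θ‖_T > 0, |q_α| ≥ 2(T+1)‖θ‖_T, and 0 < ζ < 1 − exp(−|q_α|‖θ‖_T + ‖θ‖_T²/2). Then for every a with 0 < a ≤ −ln(1−ζ) the optimization problem: maximize H(y) over y ∈ L²([0,T];ℝ^d) subject to K(y) = a, has the unique solution y*_t = θ_t τ_{λ_a}(t) with λ_a = Φ^{-1}(a); that is, K(y*) = a and H(y) ≤ H(y*) for every y with K(y) = a, with equality only if y = y* almost everywhere. -/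
open MeasureTheory Real Set Filter
open scoped RealInnerProductSpace ENNReal

set_option maxHeartbeats 1000000
noncomputable section

abbrev E (d : ℕ) := EuclideanSpace ℝ (Fin d)

/-- ω(t) = T − t + 1 -/
def om (T t : ℝ) : ℝ := T - t + 1

/-- running L²-norm ‖y‖_t = (∫₀^t |y_s|² ds)^{1/2} -/
def nrm {d : ℕ} (y : ℝ → E d) (t : ℝ) : ℝ :=
  Real.sqrt (∫ s in Set.Ioc (0:ℝ) t, ‖y s‖ ^ 2)

/-- running inner product (y,θ)_t = ∫₀^t y_s'θ_s ds -/
def ipr {d : ℕ} (y θ : ℝ → E d) (t : ℝ) : ℝ :=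
  ∫ s in Set.Ioc (0:ℝ) t, ⟪y s, θ s⟫

/-- membership in L²([0,T];ℝ^d) -/
def L2fun {d : ℕ} (T : ℝ) (y : ℝ → E d) : Prop :=
  Measurable y ∧ IntegrableOn (fun t => ‖y t‖ ^ 2) (Set.Ioc 0 T)

def k1 {d : ℕ} (T : ℝ) (θ : ℝ → E d) : ℝ :=
  ∫ t in Set.Ioc (0:ℝ) T, om T t * ‖θ t‖ ^ 2

def k2 {d : ℕ} (T : ℝ) (θ : ℝ → E d) : ℝ :=
  ∫ t in Set.Ioc (0:ℝ) T, om T t ^ 2 * ‖θ t‖ ^ 2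

/-- G(u,λ) -/
def Gfun {d : ℕ} (T : ℝ) (θ : ℝ → E d) (qa u lam : ℝ) : ℝ :=
  ∫ t in Set.Ioc (0:ℝ) T,
    (om T t + lam) ^ 2 * ‖θ t‖ ^ 2 / (lam * |qa| + u * (om T t + lam)) ^ 2

open Classical in
/-- ρ(λ) = inf{u ≥ 0 : G(u,λ) ≤ 1}, with value +∞ if no such u exists -/
def rho {d : ℕ} (T : ℝ) (θ : ℝ → E d) (qa lam : ℝ) : ℝ≥0∞ :=
  if {u : ℝ | 0 ≤ u ∧ Gfun T θ qa u lam ≤ 1}.Nonempty then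
    ENNReal.ofReal (sInf {u : ℝ | 0 ≤ u ∧ Gfun T θ qa u lam ≤ 1})
  else ⊤

open Classical in
/-- τ_λ(t), with τ_λ ≡ 1 if ρ(λ) = +∞ -/
def tau {d : ℕ} (T : ℝ) (θ : ℝ → E d) (qa lam t : ℝ) : ℝ :=
  if rho T θ qa lam = ⊤ then 1
  else (rho T θ qa lam).toReal * (om T t + lam) /
    (lam * |qa| + (rho T θ qa lam).toReal * (om T t + lam))

def lamMax {d : ℕ} (T : ℝ) (θ : ℝ → E d) (qa : ℝ) : ℝ :=
  (k1 T θ + Real.sqrt (k2 T θ * (qa ^ 2 - nrm θ T ^ 2) + k1 T θ ^ 2)) /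
    (qa ^ 2 - nrm θ T ^ 2)

/-- Φ(λ) = |q_α|‖τ_λθ‖_T + ½‖τ_λθ‖_T² − ∫₀^T τ_λ(t)|θ_t|² dt -/
def Phi {d : ℕ} (T : ℝ) (θ : ℝ → E d) (qa lam : ℝ) : ℝ :=
  |qa| * nrm (fun t => tau T θ qa lam t • θ t) T
    + nrm (fun t => tau T θ qa lam t • θ t) T ^ 2 / 2
    - ∫ t in Set.Ioc (0:ℝ) T, tau T θ qa lam t * ‖θ t‖ ^ 2

/-- H(y) = ∫₀^T ω(t)(y_t'θ_t − ½|y_t|²) dt -/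
def Hfun {d : ℕ} (T : ℝ) (θ y : ℝ → E d) : ℝ :=
  ∫ t in Set.Ioc (0:ℝ) T, om T t * (⟪y t, θ t⟫ - ‖y t‖ ^ 2 / 2)

/-- K(y) = ½‖y‖_T² + |q_α|‖y‖_T − (y,θ)_T -/
def Kfun {d : ℕ} (T : ℝ) (θ y : ℝ → E d) (qa : ℝ) : ℝ :=
  nrm y T ^ 2 / 2 + |qa| * nrm y T - ipr y θ T


section Aux

lemma ptid (P V S t w l q r : ℝ) (hr : r ≠ 0)
    (hkey : t * ((w + l) * r + l * q) = (w + l) * r) :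
    w * (t * S - t ^ 2 * S / 2) - w * (P - V / 2)
      = ((w + l) / 2) * (V - 2 * (t * P) + t ^ 2 * S)
        + l * ((t ^ 2 * S) / 2 + (q / r) * (t ^ 2 * S) - t * S
            - (V / 2 + (q / r) * (t * P) - P)) := by
  have hkey' : t * ((w + l) + l * (q / r)) = (w + l) := by
    field_simp
    linear_combination hkey
  linear_combination (P - t * S) * hkey'

lemma abs_sub_le'' (a b : ℝ) : |a - b| ≤ |a| + |b| := by
  rw [sub_eq_add_neg]
  exact (abs_add_le a (-b)).trans (by rw [abs_neg])

lemma integrable_bound {T : ℝ} {f g : ℝ → ℝ}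
    (hf : AEStronglyMeasurable f (volume.restrict (Set.Ioc 0 T)))
    (hg : IntegrableOn g (Set.Ioc 0 T))
    (h : ∀ t ∈ Set.Ioc (0:ℝ) T, |f t| ≤ g t) : IntegrableOn f (Set.Ioc 0 T) := by
  refine Integrable.mono' hg hf ?_
  filter_upwards [ae_restrict_mem measurableSet_Ioc] with t ht
  simpa [Real.norm_eq_abs] using h t ht

lemma nrm_sq {d : ℕ} (y : ℝ → E d) (T : ℝ) :
    nrm y T ^ 2 = ∫ s in Set.Ioc (0:ℝ) T, ‖y s‖ ^ 2 :=
  Real.sq_sqrt (integral_nonneg fun t => sq_nonneg _)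

lemma nrm_nonneg {d : ℕ} (y : ℝ → E d) (T : ℝ) : 0 ≤ nrm y T := Real.sqrt_nonneg _

lemma integrable_inner {d : ℕ} {T : ℝ} {y w : ℝ → E d} (hy : Measurable y) (hw : Measurable w)
    (hy2 : IntegrableOn (fun t => ‖y t‖ ^ 2) (Set.Ioc 0 T))
    (hw2 : IntegrableOn (fun t => ‖w t‖ ^ 2) (Set.Ioc 0 T)) :
    IntegrableOn (fun t => ⟪y t, w t⟫) (Set.Ioc 0 T) := by
  refine integrable_bound (Measurable.aestronglyMeasurable (by measurability))
    ((hy2.add hw2).div_const 2) fun t _ => ?_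
  simp only [Pi.add_apply]
  have h1 := abs_real_inner_le_norm (y t) (w t)
  have h2 := sq_nonneg (‖y t‖ - ‖w t‖)
  nlinarith [norm_nonneg (y t), norm_nonneg (w t)]

lemma integrable_norm_mul {d : ℕ} {T : ℝ} {y w : ℝ → E d} (hy : Measurable y) (hw : Measurable w)
    (hy2 : IntegrableOn (fun t => ‖y t‖ ^ 2) (Set.Ioc 0 T))
    (hw2 : IntegrableOn (fun t => ‖w t‖ ^ 2) (Set.Ioc 0 T)) :
    IntegrableOn (fun t => ‖y t‖ * ‖w t‖) (Set.Ioc 0 T) := by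
  refine integrable_bound (Measurable.aestronglyMeasurable (by measurability))
    ((hy2.add hw2).div_const 2) fun t _ => ?_
  simp only [Pi.add_apply]
  have h2 := sq_nonneg (‖y t‖ - ‖w t‖)
  have h3 := mul_nonneg (norm_nonneg (y t)) (norm_nonneg (w t))
  rw [abs_of_nonneg h3]
  nlinarith

lemma cs_integral {d : ℕ} {T : ℝ} {y w : ℝ → E d} (hy : Measurable y) (hw : Measurable w)
    (hy2 : IntegrableOn (fun t => ‖y t‖ ^ 2) (Set.Ioc 0 T))
    (hw2 : IntegrableOn (fun t => ‖w t‖ ^ 2) (Set.Ioc 0 T)) :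
    ipr y w T ≤ nrm y T * nrm w T := by
  have key : ∀ (u v : ℝ → E d), Measurable u → Measurable v →
      IntegrableOn (fun t => ‖u t‖ ^ 2) (Set.Ioc 0 T) → nrm u T = 0 →
      (∫ t in Set.Ioc (0:ℝ) T, ‖u t‖ * ‖v t‖) = 0 := by
    intro u v hu hv hu2 h0
    have hz : (fun t => ‖u t‖ ^ 2) =ᵐ[volume.restrict (Set.Ioc (0:ℝ) T)] 0 := by
      rw [← integral_eq_zero_iff_of_nonneg_ae (ae_of_all _ fun t => sq_nonneg _) hu2]
      rw [← nrm_sq, h0]; norm_num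
    have hz2 : (fun t => ‖u t‖ * ‖v t‖) =ᵐ[volume.restrict (Set.Ioc (0:ℝ) T)] 0 := by
      filter_upwards [hz] with t ht
      have h1 : u t = 0 := by simpa using ht
      simp [h1]
    rw [integral_congr_ae hz2]; simp
  set a := nrm y T with ha
  set b := nrm w T with hb
  have ha2 : a ^ 2 = ∫ s in Set.Ioc (0:ℝ) T, ‖y s‖ ^ 2 := nrm_sq y T
  have hb2 : b ^ 2 = ∫ s in Set.Ioc (0:ℝ) T, ‖w s‖ ^ 2 := nrm_sq w T
  have hyw := integrable_norm_mul hy hw hy2 hw2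
  have step1 : ipr y w T ≤ ∫ t in Set.Ioc (0:ℝ) T, ‖y t‖ * ‖w t‖ := by
    refine setIntegral_mono_on (integrable_inner hy hw hy2 hw2) hyw measurableSet_Ioc
      fun t _ => real_inner_le_norm _ _
  refine step1.trans ?_
  rcases eq_or_lt_of_le (nrm_nonneg y T) with h0 | hapos
  · rw [key y w hy hw hy2 h0.symm]
    exact mul_nonneg (nrm_nonneg _ _) (nrm_nonneg _ _)
  rcases eq_or_lt_of_le (nrm_nonneg w T) with h0 | hbpos
  · have h4 : (∫ t in Set.Ioc (0:ℝ) T, ‖y t‖ * ‖w t‖)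
        = ∫ t in Set.Ioc (0:ℝ) T, ‖w t‖ * ‖y t‖ := by
      congr 1; ext t; ring
    rw [h4, key w y hw hy hw2 h0.symm]
    exact mul_nonneg (nrm_nonneg _ _) (nrm_nonneg _ _)
  · have key2 : (2 * a * b) * ∫ t in Set.Ioc (0:ℝ) T, ‖y t‖ * ‖w t‖
        ≤ b ^ 2 * a ^ 2 + a ^ 2 * b ^ 2 := by
      rw [← integral_const_mul]
      have h4 : b ^ 2 * a ^ 2 + a ^ 2 * b ^ 2
          = ∫ t in Set.Ioc (0:ℝ) T, (b ^ 2 * ‖y t‖ ^ 2 + a ^ 2 * ‖w t‖ ^ 2) := by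
        rw [integral_add (hy2.const_mul _) (hw2.const_mul _), integral_const_mul,
          integral_const_mul, ← ha2, ← hb2]
      rw [h4]
      refine setIntegral_mono_on (hyw.const_mul _)
        ((hy2.const_mul _).add (hw2.const_mul _)) measurableSet_Ioc fun t _ => ?_
      nlinarith [sq_nonneg (b * ‖y t‖ - a * ‖w t‖)]
    have h2ab : 0 < 2 * a * b := by positivity
    nlinarith [key2]

lemma om_bounds {T t : ℝ} (ht : t ∈ Set.Ioc (0:ℝ) T) : 1 ≤ om T t ∧ om T t ≤ T + 1 := by
  obtain ⟨h1, h2⟩ := ht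
  constructor <;> simp [om] <;> linarith

section G
variable {d : ℕ} {T : ℝ} {θ : ℝ → E d} {qa lam : ℝ}

lemma Gmeas (hθm : Measurable θ) (u : ℝ) :
    AEStronglyMeasurable (fun t =>
      (om T t + lam) ^ 2 * ‖θ t‖ ^ 2 / (lam * |qa| + u * (om T t + lam)) ^ 2)
      (volume.restrict (Set.Ioc 0 T)) := by
  apply Measurable.aestronglyMeasurable
  unfold om
  fun_prop

lemma Gint_integrable (hθm : Measurable θ)
    (hθ2 : IntegrableOn (fun t => ‖θ t‖ ^ 2) (Set.Ioc 0 T))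
    (hlq : 0 < lam * |qa|) (hlam : 0 ≤ lam) {u : ℝ} (hu : 0 ≤ u) :
    IntegrableOn (fun t =>
      (om T t + lam) ^ 2 * ‖θ t‖ ^ 2 / (lam * |qa| + u * (om T t + lam)) ^ 2)
      (Set.Ioc 0 T) := by
  refine integrable_bound (Gmeas hθm u)
    (hθ2.const_mul ((T + 1 + lam) ^ 2 / (lam * |qa|) ^ 2)) fun t ht => ?_
  obtain ⟨h1, h2⟩ := om_bounds ht
  have hA : 0 < om T t + lam := by linarith
  have hD : lam * |qa| ≤ lam * |qa| + u * (om T t + lam) := by nlinarith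
  have hsq : (om T t + lam) ^ 2 ≤ (T + 1 + lam) ^ 2 := by nlinarith
  have hnum : (om T t + lam) ^ 2 * ‖θ t‖ ^ 2 ≤ (T + 1 + lam) ^ 2 * ‖θ t‖ ^ 2 :=
    mul_le_mul_of_nonneg_right hsq (sq_nonneg _)
  rw [abs_of_nonneg (by positivity)]
  calc (om T t + lam) ^ 2 * ‖θ t‖ ^ 2 / (lam * |qa| + u * (om T t + lam)) ^ 2
      ≤ (T + 1 + lam) ^ 2 * ‖θ t‖ ^ 2 / (lam * |qa|) ^ 2 := by
        apply div_le_div₀ (by positivity) hnum (by positivity)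
        nlinarith
    _ = (T + 1 + lam) ^ 2 / (lam * |qa|) ^ 2 * ‖θ t‖ ^ 2 := by ring

lemma G_anti (hθm : Measurable θ)
    (hθ2 : IntegrableOn (fun t => ‖θ t‖ ^ 2) (Set.Ioc 0 T))
    (hlq : 0 < lam * |qa|) (hlam : 0 ≤ lam) {u v : ℝ} (hu : 0 ≤ u) (huv : u ≤ v) :
    Gfun T θ qa v lam ≤ Gfun T θ qa u lam := by
  refine setIntegral_mono_on (Gint_integrable hθm hθ2 hlq hlam (hu.trans huv))
    (Gint_integrable hθm hθ2 hlq hlam hu) measurableSet_Ioc fun t ht => ?_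
  obtain ⟨h1, h2⟩ := om_bounds ht
  have hA : 0 < om T t + lam := by linarith
  apply div_le_div_of_nonneg_left (by positivity) (by positivity)
  have h3 : u * (om T t + lam) ≤ v * (om T t + lam) := mul_le_mul_of_nonneg_right huv hA.le
  nlinarith [mul_nonneg hu hA.le]

lemma G_cont (hθm : Measurable θ)
    (hθ2 : IntegrableOn (fun t => ‖θ t‖ ^ 2) (Set.Ioc 0 T))
    (hlq : 0 < lam * |qa|) (hlam : 0 ≤ lam) {u : ℕ → ℝ} {c : ℝ}
    (hu : ∀ n, 0 ≤ u n) (hc : 0 ≤ c) (hlim : Tendsto u atTop (nhds c)) :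
    Tendsto (fun n => Gfun T θ qa (u n) lam) atTop (nhds (Gfun T θ qa c lam)) := by
  refine tendsto_integral_of_dominated_convergence
    (fun t => (T + 1 + lam) ^ 2 / (lam * |qa|) ^ 2 * ‖θ t‖ ^ 2)
    (fun n => Gmeas hθm (u n)) (hθ2.const_mul _) (fun n => ?_) ?_
  · filter_upwards [ae_restrict_mem measurableSet_Ioc] with t ht
    obtain ⟨h1, h2⟩ := om_bounds ht
    have hA : 0 < om T t + lam := by linarith
    have hD : lam * |qa| ≤ lam * |qa| + u n * (om T t + lam) := by nlinarith [hu n]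
    rw [Real.norm_eq_abs, abs_of_nonneg (by positivity)]
    calc (om T t + lam) ^ 2 * ‖θ t‖ ^ 2 / (lam * |qa| + u n * (om T t + lam)) ^ 2
        ≤ (T + 1 + lam) ^ 2 * ‖θ t‖ ^ 2 / (lam * |qa|) ^ 2 := by
          have hsq : (om T t + lam) ^ 2 ≤ (T + 1 + lam) ^ 2 := by nlinarith
          apply div_le_div₀ (by positivity)
            (mul_le_mul_of_nonneg_right hsq (sq_nonneg _)) (by positivity)
          nlinarith
      _ = (T + 1 + lam) ^ 2 / (lam * |qa|) ^ 2 * ‖θ t‖ ^ 2 := by ring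
  · filter_upwards [ae_restrict_mem measurableSet_Ioc] with t ht
    obtain ⟨h1, h2⟩ := om_bounds ht
    have hA : 0 < om T t + lam := by linarith
    have hDc : (0:ℝ) < (lam * |qa| + c * (om T t + lam)) ^ 2 := by positivity
    apply Tendsto.div tendsto_const_nhds
    · exact (Tendsto.const_add _ (hlim.mul_const _)).pow 2
    · exact hDc.ne'

lemma G_inf_eq_one (hθm : Measurable θ)
    (hθ2 : IntegrableOn (fun t => ‖θ t‖ ^ 2) (Set.Ioc 0 T))
    (hlq : 0 < lam * |qa|) (hlam : 0 ≤ lam)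
    (hS : {u : ℝ | 0 ≤ u ∧ Gfun T θ qa u lam ≤ 1}.Nonempty)
    (hr : 0 < sInf {u : ℝ | 0 ≤ u ∧ Gfun T θ qa u lam ≤ 1}) :
    Gfun T θ qa (sInf {u : ℝ | 0 ≤ u ∧ Gfun T θ qa u lam ≤ 1}) lam = 1 := by
  set S := {u : ℝ | 0 ≤ u ∧ Gfun T θ qa u lam ≤ 1} with hSdef
  set r := sInf S with hrdef
  have hbdd : BddBelow S := ⟨0, fun x hx => hx.1⟩
  have hup : ∀ u, r < u → u ∈ S := by
    intro u hu
    obtain ⟨s, hsS, hs⟩ := (csInf_lt_iff hbdd hS).1 hu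
    exact ⟨hsS.1.trans hs.le, (G_anti hθm hθ2 hlq hlam hsS.1 hs.le).trans hsS.2⟩
  have hle : Gfun T θ qa r lam ≤ 1 := by
    have h0 : Tendsto (fun n : ℕ => r + 1 / ((n : ℝ) + 1)) atTop (nhds r) := by
      have := tendsto_one_div_add_atTop_nhds_zero_nat (𝕜 := ℝ)
      simpa using tendsto_const_nhds.add this
    have hGt := G_cont hθm hθ2 hlq hlam
      (fun n => by positivity) hr.le h0
    refine le_of_tendsto hGt (Eventually.of_forall fun n => ?_)
    have hp : (0:ℝ) < 1 / ((n:ℝ) + 1) := by positivity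
    exact (hup _ (by linarith)).2
  have hge : 1 ≤ Gfun T θ qa r lam := by
    have h2 : ∀ n : ℕ, (0:ℝ) < ((n : ℝ) + 2) := fun n => by positivity
    have h0 : Tendsto (fun n : ℕ => r - r / ((n : ℝ) + 2)) atTop (nhds r) := by
      have ha : Tendsto (fun n : ℕ => ((n : ℝ) + 2)) atTop atTop :=
        tendsto_atTop_add_const_right _ _ tendsto_natCast_atTop_atTop
      have hb : Tendsto (fun n : ℕ => ((n : ℝ) + 2)⁻¹) atTop (nhds 0) :=
        ha.inv_tendsto_atTop
      have hcc : Tendsto (fun n : ℕ => r - r * ((n : ℝ) + 2)⁻¹) atTop (nhds (r - r * 0)) :=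
        Tendsto.sub tendsto_const_nhds (hb.const_mul r)
      simpa [div_eq_mul_inv] using hcc
    have hun : ∀ n : ℕ, 0 ≤ r - r / ((n : ℝ) + 2) := by
      intro n
      have h5 : r / ((n:ℝ) + 2) ≤ r / 1 := by
        apply div_le_div_of_nonneg_left hr.le one_pos; linarith [h2 n]
      simp at h5; linarith
    have hGt := G_cont hθm hθ2 hlq hlam hun hr.le h0
    refine ge_of_tendsto hGt (Eventually.of_forall fun n => ?_)
    have hlt : r - r / ((n : ℝ) + 2) < r := by
      have : 0 < r / ((n:ℝ) + 2) := by positivity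
      linarith
    have hnot : (r - r / ((n : ℝ) + 2)) ∉ S := fun hmem =>
      absurd (csInf_le hbdd hmem) (by linarith)
    by_contra hcon
    exact hnot ⟨hun n, le_of_not_gt (by push_neg at hcon ⊢; linarith)⟩
  linarith
end G

end Aux

/-- Proposition 1 of the paper. -/
theorem stmt2 {d : ℕ} (hd : 1 ≤ d) {T : ℝ} (hT : 0 < T)
    (θ : ℝ → E d) (hθm : Measurable θ)
    (hθ2 : IntegrableOn (fun t => ‖θ t‖ ^ 2) (Set.Ioc 0 T))
    {a qa : ℝ} (ha0 : 0 < a) (ha2 : a < 1 / 2) (hqneg : qa < 0)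
    (hquant : (∫ s in Set.Iic qa, Real.exp (-s ^ 2 / 2)) = a * Real.sqrt (2 * π))
    {z : ℝ} (hz0 : 0 < z)
    (hz1 : z < 1 - Real.exp (-(|qa| * nrm θ T) + nrm θ T ^ 2 / 2))
    (hθpos : 0 < nrm θ T)
    (hqbig : 2 * (T + 1) * nrm θ T ≤ |qa|) :
    ∀ b : ℝ, 0 < b → b ≤ -Real.log (1 - z) →
      ∀ lam : ℝ, lam ∈ Set.Icc 0 (lamMax T θ qa) → Phi T θ qa lam = b →
        Kfun T θ (fun t => tau T θ qa lam t • θ t) qa = b ∧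
        ∀ y : ℝ → E d, L2fun T y → Kfun T θ y qa = b →
          Hfun T θ y ≤ Hfun T θ (fun t => tau T θ qa lam t • θ t) ∧
          (Hfun T θ y = Hfun T θ (fun t => tau T θ qa lam t • θ t) →
            y =ᵐ[volume.restrict (Set.Ioc (0:ℝ) T)] fun t => tau T θ qa lam t • θ t) := by
  intro b hb0 hble lam hlamIcc hPhi
  have habs : 0 < |qa| := abs_pos.mpr hqneg.ne
  have hKPhi : Kfun T θ (fun t => tau T θ qa lam t • θ t) qa = Phi T θ qa lam := by
    have hip : ∀ t : ℝ, ⟪tau T θ qa lam t • θ t, θ t⟫ = tau T θ qa lam t * ‖θ t‖ ^ 2 := by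
      intro t; rw [real_inner_smul_left, real_inner_self_eq_norm_sq]
    unfold Kfun Phi ipr
    simp_rw [hip]
    ring
  have part1 : Kfun T θ (fun t => tau T θ qa lam t • θ t) qa = b := hKPhi.trans hPhi
  refine ⟨part1, ?_⟩
  by_cases hrtop : rho T θ qa lam = ⊤
  · exfalso
    have htau1 : ∀ t : ℝ, tau T θ qa lam t = 1 := fun t => by simp [tau, hrtop]
    have hPhi' : Phi T θ qa lam = |qa| * nrm θ T + nrm θ T ^ 2 / 2 - nrm θ T ^ 2 := by
      unfold Phi
      simp_rw [htau1, one_smul, one_mul]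
      rw [← nrm_sq]
    have h1z : Real.exp (-(|qa| * nrm θ T) + nrm θ T ^ 2 / 2) < 1 - z := by linarith
    have hpos : (0:ℝ) < 1 - z := (Real.exp_pos _).trans h1z
    have hlog : -(|qa| * nrm θ T) + nrm θ T ^ 2 / 2 < Real.log (1 - z) :=
      (Real.lt_log_iff_exp_lt hpos).mpr h1z
    have hbval : |qa| * nrm θ T + nrm θ T ^ 2 / 2 - nrm θ T ^ 2 = b := hPhi'.symm.trans hPhi
    linarith
  have hS : {u : ℝ | 0 ≤ u ∧ Gfun T θ qa u lam ≤ 1}.Nonempty := by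
    by_contra hSe
    exact hrtop (by simp [rho, hSe])
  set S := {u : ℝ | 0 ≤ u ∧ Gfun T θ qa u lam ≤ 1} with hSdef
  have hbdd : BddBelow S := ⟨0, fun x hx => hx.1⟩
  have hinf0 : 0 ≤ sInf S := le_csInf hS fun x hx => hx.1
  have hrho_eq : rho T θ qa lam = ENNReal.ofReal (sInf S) := by
    simp only [rho]; exact if_pos hS
  set r := (rho T θ qa lam).toReal with hrdef
  have hr_eq : r = sInf S := by rw [hrdef, hrho_eq, ENNReal.toReal_ofReal hinf0]
  have htau : ∀ t : ℝ, tau T θ qa lam t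
      = r * (om T t + lam) / (lam * |qa| + r * (om T t + lam)) := by
    intro t
    simp only [tau, if_neg hrtop, ← hrdef]
  rcases eq_or_lt_of_le (hrdef ▸ ENNReal.toReal_nonneg : (0:ℝ) ≤ r) with hr0 | hrpos
  · exfalso
    have htau0 : ∀ t : ℝ, tau T θ qa lam t = 0 := by
      intro t; rw [htau, ← hr0]; simp
    have hPhi0 : Phi T θ qa lam = 0 := by
      unfold Phi nrm
      simp_rw [htau0, zero_smul, zero_mul]
      simp
    linarith [hPhi0.symm.trans hPhi]
  have hlampos : 0 < lam := by
    rcases eq_or_lt_of_le hlamIcc.1 with h0 | h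
    · exfalso
      have h0S : (0:ℝ) ∈ S := by
        refine ⟨le_refl 0, ?_⟩
        rw [← h0]
        unfold Gfun
        simp
      have hle0 := csInf_le hbdd h0S
      rw [← hr_eq] at hle0
      linarith
    · exact h
  have hlq : 0 < lam * |qa| := mul_pos hlampos habs
  have hG1 : Gfun T θ qa r lam = 1 := by
    rw [hr_eq]
    exact G_inf_eq_one hθm hθ2 hlq hlamIcc.1 hS (hr_eq ▸ hrpos)
  set w := fun t => tau T θ qa lam t • θ t with hwdef
  have hApos : ∀ t ∈ Set.Ioc (0:ℝ) T, 0 < om T t + lam := by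
    intro t ht
    have := (om_bounds ht).1
    linarith [hlamIcc.1]
  have hDpos : ∀ t ∈ Set.Ioc (0:ℝ) T, 0 < lam * |qa| + r * (om T t + lam) := by
    intro t ht
    have hA := hApos t ht
    nlinarith
  have htau01 : ∀ t ∈ Set.Ioc (0:ℝ) T, 0 ≤ tau T θ qa lam t ∧ tau T θ qa lam t ≤ 1 := by
    intro t ht
    have hA := hApos t ht
    have hD := hDpos t ht
    rw [htau]
    constructor
    · exact div_nonneg (by nlinarith) hD.le
    · rw [div_le_one hD]; nlinarith
  have hkey : ∀ t ∈ Set.Ioc (0:ℝ) T,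
      tau T θ qa lam t * ((om T t + lam) * r + lam * |qa|) = (om T t + lam) * r := by
    intro t ht
    have hD := (hDpos t ht).ne'
    rw [htau, div_mul_eq_mul_div, div_eq_iff hD]
    ring
  have htauMeas : Measurable (tau T θ qa lam) := by
    have he : tau T θ qa lam
        = fun t => r * (om T t + lam) / (lam * |qa| + r * (om T t + lam)) := funext htau
    rw [he]; unfold om; fun_prop
  have hwMeas : Measurable w := htauMeas.smul hθm
  have homM : Measurable (fun t => om T t + lam) := by unfold om; fun_prop
  have homM0 : Measurable (om T) := by unfold om; fun_prop
  have hwnorm : ∀ t ∈ Set.Ioc (0:ℝ) T, ‖w t‖ ≤ ‖θ t‖ := by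
    intro t ht
    show ‖tau T θ qa lam t • θ t‖ ≤ ‖θ t‖
    rw [norm_smul, Real.norm_eq_abs, abs_of_nonneg (htau01 t ht).1]
    nlinarith [norm_nonneg (θ t), (htau01 t ht).2, (htau01 t ht).1]
  have hw2 : IntegrableOn (fun t => ‖w t‖ ^ 2) (Set.Ioc 0 T) := by
    refine integrable_bound ((hwMeas.norm.pow_const 2).aestronglyMeasurable) hθ2 fun t ht => ?_
    rw [abs_of_nonneg (sq_nonneg _)]
    exact pow_le_pow_left₀ (norm_nonneg _) (hwnorm t ht) 2
  have hwint_eq : (∫ t in Set.Ioc (0:ℝ) T, ‖w t‖ ^ 2) = r ^ 2 := by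
    have hcg : ∀ t ∈ Set.Ioc (0:ℝ) T, ‖w t‖ ^ 2
        = r ^ 2 * ((om T t + lam) ^ 2 * ‖θ t‖ ^ 2
          / (lam * |qa| + r * (om T t + lam)) ^ 2) := by
      intro t ht
      show ‖tau T θ qa lam t • θ t‖ ^ 2 = _
      have hD := (hDpos t ht).ne'
      rw [norm_smul, mul_pow, Real.norm_eq_abs, sq_abs, htau]
      field_simp
    rw [setIntegral_congr_fun measurableSet_Ioc hcg, integral_const_mul]
    have hGr : (∫ t in Set.Ioc (0:ℝ) T, (om T t + lam) ^ 2 * ‖θ t‖ ^ 2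
        / (lam * |qa| + r * (om T t + lam)) ^ 2) = Gfun T θ qa r lam := rfl
    rw [hGr, hG1, mul_one]
  have hNw : nrm w T = r := by
    unfold nrm
    rw [hwint_eq, Real.sqrt_sq hrpos.le]
  intro y hy hKy
  obtain ⟨hym, hy2⟩ := hy
  have hyθint := integrable_inner hym hθm hy2 hθ2
  have hywint := integrable_inner hym hwMeas hy2 hw2
  have hwθint := integrable_inner hwMeas hθm hw2 hθ2
  set F3 := fun t => (om T t + lam) / 2 * ‖y t - w t‖ ^ 2 with hF3def
  have hF3int : IntegrableOn F3 (Set.Ioc 0 T) := by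
    refine integrable_bound
      (((homM.div_const 2).mul (((hym.sub hwMeas).norm).pow_const 2)).aestronglyMeasurable)
      ((hy2.add hθ2).const_mul (T + 1 + lam)) fun t ht => ?_
    obtain ⟨h1, h2⟩ := om_bounds ht
    have h3 := hwnorm t ht
    have h4 : ‖y t - w t‖ ≤ ‖y t‖ + ‖w t‖ := norm_sub_le _ _
    have h5 : ‖y t - w t‖ ^ 2 ≤ 2 * ‖y t‖ ^ 2 + 2 * ‖θ t‖ ^ 2 := by
      have h6 := mul_self_le_mul_self (norm_nonneg (y t - w t)) h4
      have h7 := mul_self_le_mul_self (norm_nonneg (w t)) h3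
      nlinarith [sq_nonneg (‖y t‖ - ‖w t‖), norm_nonneg (y t), norm_nonneg (w t)]
    rw [hF3def]
    simp only [Pi.add_apply]
    rw [abs_of_nonneg (mul_nonneg (by linarith [hlamIcc.1]) (sq_nonneg _))]
    have h8 : (om T t + lam) / 2 * ‖y t - w t‖ ^ 2
        ≤ (T + 1 + lam) / 2 * (2 * ‖y t‖ ^ 2 + 2 * ‖θ t‖ ^ 2) := by
      apply mul_le_mul (by linarith) h5 (sq_nonneg _) (by linarith)
    nlinarith [h8]
  have hHint : ∀ (v : ℝ → E d), Measurable v →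
      IntegrableOn (fun t => ‖v t‖ ^ 2) (Set.Ioc 0 T) →
      IntegrableOn (fun t => om T t * (⟪v t, θ t⟫ - ‖v t‖ ^ 2 / 2)) (Set.Ioc 0 T) := by
    intro v hv hv2
    refine integrable_bound
      ((homM0.mul ((hv.inner hθm).sub ((hv.norm.pow_const 2).div_const 2))).aestronglyMeasurable)
      ((hv2.add hθ2).const_mul (T + 1)) fun t ht => ?_
    obtain ⟨h1, h2⟩ := om_bounds ht
    have hP := abs_real_inner_le_norm (v t) (θ t)
    have h6 : |⟪v t, θ t⟫ - ‖v t‖ ^ 2 / 2| ≤ ‖v t‖ * ‖θ t‖ + ‖v t‖ ^ 2 / 2 := by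
      refine (abs_sub_le'' _ _).trans ?_
      have h7 : |‖v t‖ ^ 2 / 2| = ‖v t‖ ^ 2 / 2 := abs_of_nonneg (by positivity)
      rw [h7]
      exact add_le_add hP le_rfl
    have h7 : ‖v t‖ * ‖θ t‖ ≤ (‖v t‖ ^ 2 + ‖θ t‖ ^ 2) / 2 := by
      nlinarith [sq_nonneg (‖v t‖ - ‖θ t‖)]
    rw [abs_mul, abs_of_nonneg (by linarith : (0:ℝ) ≤ om T t)]
    simp only [Pi.add_apply]
    calc om T t * |⟪v t, θ t⟫ - ‖v t‖ ^ 2 / 2|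
        ≤ om T t * (‖v t‖ * ‖θ t‖ + ‖v t‖ ^ 2 / 2) :=
          mul_le_mul_of_nonneg_left h6 (by linarith)
      _ ≤ (T + 1) * (‖v t‖ * ‖θ t‖ + ‖v t‖ ^ 2 / 2) := by
          apply mul_le_mul_of_nonneg_right h2
          positivity
      _ ≤ (T + 1) * (‖v t‖ ^ 2 + ‖θ t‖ ^ 2) := by
          apply mul_le_mul_of_nonneg_left _ (by linarith)
          nlinarith [sq_nonneg (‖v t‖), sq_nonneg (‖θ t‖)]
  have hF1int := hHint w hwMeas hw2
  have hF2int := hHint y hym hy2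
  set F4 := fun t => ‖w t‖ ^ 2 / 2 + |qa| / r * ‖w t‖ ^ 2 - ⟪w t, θ t⟫ with hF4def
  set F5 := fun t => ‖y t‖ ^ 2 / 2 + |qa| / r * ⟪y t, w t⟫ - ⟪y t, θ t⟫ with hF5def
  have hF4int : IntegrableOn F4 (Set.Ioc 0 T) :=
    ((hw2.div_const 2).add (hw2.const_mul (|qa| / r))).sub hwθint
  have hF5int : IntegrableOn F5 (Set.Ioc 0 T) :=
    ((hy2.div_const 2).add (hywint.const_mul (|qa| / r))).sub hyθint
  have hpt : ∀ t ∈ Set.Ioc (0:ℝ) T,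
      om T t * (⟪w t, θ t⟫ - ‖w t‖ ^ 2 / 2) - om T t * (⟪y t, θ t⟫ - ‖y t‖ ^ 2 / 2)
        = F3 t + lam * (F4 t - F5 t) := by
    intro t ht
    have e1 : ⟪w t, θ t⟫ = tau T θ qa lam t * ‖θ t‖ ^ 2 := by
      show ⟪tau T θ qa lam t • θ t, θ t⟫ = _
      rw [real_inner_smul_left, real_inner_self_eq_norm_sq]
    have e2 : ‖w t‖ ^ 2 = (tau T θ qa lam t) ^ 2 * ‖θ t‖ ^ 2 := by
      show ‖tau T θ qa lam t • θ t‖ ^ 2 = _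
      rw [norm_smul, mul_pow, Real.norm_eq_abs, sq_abs]
    have e3 : ⟪y t, w t⟫ = tau T θ qa lam t * ⟪y t, θ t⟫ := by
      show ⟪y t, tau T θ qa lam t • θ t⟫ = _
      rw [real_inner_smul_right]
    have e4 : ‖y t - w t‖ ^ 2
        = ‖y t‖ ^ 2 - 2 * (tau T θ qa lam t * ⟪y t, θ t⟫)
          + (tau T θ qa lam t) ^ 2 * ‖θ t‖ ^ 2 := by
      rw [@norm_sub_sq_real, e3, e2]
    simp only [hF3def, hF4def, hF5def]
    rw [e1, e2, e3, e4]
    exact ptid ⟪y t, θ t⟫ (‖y t‖ ^ 2) (‖θ t‖ ^ 2) (tau T θ qa lam t) (om T t) lam |qa| r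
      hrpos.ne' (hkey t ht)
  have estep : Hfun T θ w - Hfun T θ y
      = (∫ t in Set.Ioc (0:ℝ) T, F3 t)
        + lam * ((∫ t in Set.Ioc (0:ℝ) T, F4 t) - ∫ t in Set.Ioc (0:ℝ) T, F5 t) := by
    have h1 : Hfun T θ w - Hfun T θ y
        = ∫ t in Set.Ioc (0:ℝ) T,
            (om T t * (⟪w t, θ t⟫ - ‖w t‖ ^ 2 / 2)
              - om T t * (⟪y t, θ t⟫ - ‖y t‖ ^ 2 / 2)) := by
      unfold Hfun
      exact (integral_sub hF1int hF2int).symm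
    rw [h1, setIntegral_congr_fun measurableSet_Ioc (fun t ht => hpt t ht)]
    have h45 : IntegrableOn (fun t => F4 t - F5 t) (Set.Ioc 0 T) := hF4int.sub hF5int
    rw [integral_add hF3int (h45.const_mul lam), integral_const_mul,
      integral_sub hF4int hF5int]
  have hF4val : (∫ t in Set.Ioc (0:ℝ) T, F4 t) = b := by
    have h4 : (∫ t in Set.Ioc (0:ℝ) T, F4 t)
        = (∫ t in Set.Ioc (0:ℝ) T, ‖w t‖ ^ 2) / 2
          + |qa| / r * (∫ t in Set.Ioc (0:ℝ) T, ‖w t‖ ^ 2) - ipr w θ T := by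
      simp only [hF4def]
      have ha1 : IntegrableOn (fun t => ‖w t‖ ^ 2 / 2) (Set.Ioc 0 T) := hw2.div_const 2
      have ha2 : IntegrableOn (fun t => |qa| / r * ‖w t‖ ^ 2) (Set.Ioc 0 T) :=
        hw2.const_mul (|qa| / r)
      have ha3 : IntegrableOn (fun t => ‖w t‖ ^ 2 / 2 + |qa| / r * ‖w t‖ ^ 2) (Set.Ioc 0 T) :=
        ha1.add ha2
      rw [integral_sub ha3 hwθint, integral_add ha1 ha2, integral_div, integral_const_mul]
      rfl
    rw [h4, hwint_eq]
    have hb' : Kfun T θ w qa = b := part1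
    unfold Kfun at hb'
    rw [hNw] at hb'
    have h5 : |qa| / r * r ^ 2 = |qa| * r := by
      field_simp
    linarith
  have hny : nrm y T ^ 2 = ∫ t in Set.Ioc (0:ℝ) T, ‖y t‖ ^ 2 := nrm_sq y T
  have hF5val : b - (∫ t in Set.Ioc (0:ℝ) T, F5 t)
      = |qa| * nrm y T - |qa| / r * ipr y w T := by
    have h5 : (∫ t in Set.Ioc (0:ℝ) T, F5 t)
        = (∫ t in Set.Ioc (0:ℝ) T, ‖y t‖ ^ 2) / 2
          + |qa| / r * ipr y w T - ipr y θ T := by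
      simp only [hF5def]
      have ha1 : IntegrableOn (fun t => ‖y t‖ ^ 2 / 2) (Set.Ioc 0 T) := hy2.div_const 2
      have ha2 : IntegrableOn (fun t => |qa| / r * ⟪y t, w t⟫) (Set.Ioc 0 T) :=
        hywint.const_mul (|qa| / r)
      have ha3 : IntegrableOn (fun t => ‖y t‖ ^ 2 / 2 + |qa| / r * ⟪y t, w t⟫) (Set.Ioc 0 T) :=
        ha1.add ha2
      rw [integral_sub ha3 hyθint, integral_add ha1 ha2, integral_div, integral_const_mul]
      rfl
    unfold Kfun at hKy
    rw [h5]
    linarith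
  have hcs : ipr y w T ≤ nrm y T * r := by
    have h6 := cs_integral hym hwMeas hy2 hw2
    rwa [hNw] at h6
  have hRnn : 0 ≤ |qa| * nrm y T - |qa| / r * ipr y w T := by
    have h1 : |qa| / r * ipr y w T ≤ |qa| / r * (nrm y T * r) :=
      mul_le_mul_of_nonneg_left hcs (by positivity)
    have h2 : |qa| / r * (nrm y T * r) = |qa| * nrm y T := by
      field_simp
    linarith
  have hI3nn : 0 ≤ ∫ t in Set.Ioc (0:ℝ) T, F3 t := by
    apply setIntegral_nonneg measurableSet_Ioc
    intro t ht
    have hA := hApos t ht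
    simp only [hF3def]
    exact mul_nonneg (by linarith) (sq_nonneg _)
  have hdiff : (∫ t in Set.Ioc (0:ℝ) T, F4 t) - (∫ t in Set.Ioc (0:ℝ) T, F5 t)
      = |qa| * nrm y T - |qa| / r * ipr y w T := by linarith
  rw [hdiff] at estep
  have hmul : 0 ≤ lam * (|qa| * nrm y T - |qa| / r * ipr y w T) :=
    mul_nonneg hlampos.le hRnn
  constructor
  · linarith
  · intro heq
    have hz3 : (∫ t in Set.Ioc (0:ℝ) T, F3 t) = 0 := by linarith
    have hae : F3 =ᵐ[volume.restrict (Set.Ioc (0:ℝ) T)] 0 := by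
      refine (integral_eq_zero_iff_of_nonneg_ae ?_ hF3int).mp hz3
      filter_upwards [ae_restrict_mem measurableSet_Ioc] with t ht
      have hA := hApos t ht
      simp only [hF3def, Pi.zero_apply]
      exact mul_nonneg (by linarith) (sq_nonneg _)
    filter_upwards [hae, ae_restrict_mem measurableSet_Ioc] with t h3 ht
    have hA := hApos t ht
    simp only [hF3def, Pi.zero_apply] at h3
    have h7 : ‖y t - w t‖ ^ 2 = 0 := by
      rcases mul_eq_zero.mp h3 with h | h
      · exfalso; rw [div_eq_zero_iff] at h; rcases h with h | h <;> linarith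
      · exact h
    have h8 : ‖y t - w t‖ = 0 := sq_eq_zero_iff.mp h7
    exact sub_eq_zero.mp (norm_eq_zero.mp h8)
end
end

section
/- Assume ‖θ‖_T = 0. Then for every ζ ∈ (0,1) and every α ∈ (0,1/2), the strategy ν* = (0, v^γ) with γ = min(T/(T+1), ζ) satisfies the VaR constraint at level ζ and maximizes J(x,·) over all ν ∈ U satisfying the VaR constraint at level ζ; moreover γ is the unique maximizer of κ ↦ ln(1−κ) + T ln κ over (0,ζ]. -/
open MeasureTheory Real Set Filter
open scoped RealInnerProductSpace ENNReal

noncomputable section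

/-- cumulated consumption V_t = ∫₀^t v_s ds -/
def Vtot (v : ℝ → ℝ) (t : ℝ) : ℝ := ∫ s in Set.Ioc (0:ℝ) t, v s

/-- the set U of admissible deterministic strategies -/
def Admiss {d : ℕ} (T : ℝ) (y : ℝ → E d) (v : ℝ → ℝ) : Prop :=
  Measurable y ∧ IntegrableOn (fun t => ‖y t‖ ^ 2) (Set.Ioc 0 T) ∧
    Measurable v ∧ (∀ t ∈ Set.Icc (0:ℝ) T, 0 < v t) ∧
    IntegrableOn v (Set.Ioc 0 T) ∧
    IntegrableOn (fun t => max (-Real.log (v t)) 0) (Set.Ioc 0 T)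

/-- the cost J(x,ν) -/
def Jcost {d : ℕ} (T x : ℝ) (r : ℝ → ℝ) (θ y : ℝ → E d) (v : ℝ → ℝ) : ℝ :=
  (T + 1) * Real.log x
    + (∫ t in Set.Ioc (0:ℝ) T, om T t * (r t + ⟪y t, θ t⟫ - ‖y t‖ ^ 2 / 2))
    + (∫ t in Set.Ioc (0:ℝ) T, (Real.log (v t) - Vtot v t))
    - Vtot v T

/-- A(x) = (T+1)ln x + ∫₀^T ω(t)r_t dt − T ln T -/
def Aconst (T x : ℝ) (r : ℝ → ℝ) : ℝ :=
  (T + 1) * Real.log x + (∫ t in Set.Ioc (0:ℝ) T, om T t * r t) - T * Real.log T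

/-- v^κ_t = κ/(T − tκ) -/
def vk (T k t : ℝ) : ℝ := k / (T - t * k)

/-- the VaR constraint at level ζ -/
def VaROK {d : ℕ} (T : ℝ) (θ y : ℝ → E d) (v : ℝ → ℝ) (qa z : ℝ) : Prop :=
  ∀ t ∈ Set.Icc (0:ℝ) T,
    Real.log (1 - z) ≤ ipr y θ t - nrm y t ^ 2 / 2 - Vtot v t - |qa| * nrm y t

section Aux

variable {T : ℝ}

lemma denomPos (hT : 0 < T) {γ : ℝ} (hγ0 : 0 < γ) (hγ1 : γ < 1) {t : ℝ}
    (ht0 : 0 ≤ t) (htT : t ≤ T) : 0 < T - t * γ := by nlinarith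

lemma vk_contOn (hT : 0 < T) {γ : ℝ} (hγ0 : 0 < γ) (hγ1 : γ < 1) {b : ℝ} (hb : b ≤ T) :
    ContinuousOn (vk T γ) (Icc 0 b) := by
  apply ContinuousOn.div continuousOn_const
  · exact (continuous_const.sub (continuous_id.mul continuous_const)).continuousOn
  · exact fun t ht => (denomPos hT hγ0 hγ1 ht.1 (ht.2.trans hb)).ne'

lemma Vtot_vk (hT : 0 < T) {γ : ℝ} (hγ0 : 0 < γ) (hγ1 : γ < 1) {t : ℝ}
    (ht0 : 0 ≤ t) (htT : t ≤ T) :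
    Vtot (vk T γ) t = Real.log T - Real.log (T - t * γ) := by
  have h1 : ∫ s in (0:ℝ)..t, vk T γ s
      = (fun u => -Real.log (T - u * γ)) t - (fun u => -Real.log (T - u * γ)) 0 := by
    apply intervalIntegral.integral_eq_sub_of_hasDerivAt
    · intro s hs
      rw [uIcc_of_le ht0] at hs
      have hd : 0 < T - s * γ := denomPos hT hγ0 hγ1 hs.1 (hs.2.trans htT)
      have hD : HasDerivAt (fun u : ℝ => T - u * γ) (-γ) s := by
        simpa using ((hasDerivAt_id s).mul_const γ).const_sub T
      have h2 := (hD.log hd.ne').neg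
      convert h2 using 1
      · rfl
      · unfold vk
        field_simp
    · apply ContinuousOn.intervalIntegrable
      rw [uIcc_of_le ht0]
      exact vk_contOn hT hγ0 hγ1 htT
  rw [intervalIntegral.integral_of_le ht0] at h1
  simp only [zero_mul, sub_zero] at h1
  rw [Vtot, h1]
  ring

lemma integral_Vtot {v : ℝ → ℝ} (hT : 0 < T) (hvm : Measurable v)
    (hvi : IntegrableOn v (Ioc 0 T)) :
    ∫ t in Ioc (0:ℝ) T, Vtot v t = ∫ s in Ioc (0:ℝ) T, (T - s) * v s := by
  haveI : IsFiniteMeasure (volume.restrict (Ioc (0:ℝ) T)) :=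
    ⟨by rw [Measure.restrict_apply_univ]; exact measure_Ioc_lt_top⟩
  set μ := volume.restrict (Ioc (0:ℝ) T) with hμ
  have hsm : AEStronglyMeasurable (Function.uncurry fun t s => (Ioc (0:ℝ) t).indicator v s)
      (μ.prod μ) := by
    have heq : (Function.uncurry fun t s => (Ioc (0:ℝ) t).indicator v s)
        = {p : ℝ × ℝ | 0 < p.2 ∧ p.2 ≤ p.1}.indicator (fun p => v p.2) := by
      funext p
      by_cases h : 0 < p.2 ∧ p.2 ≤ p.1 <;>
        simp [Function.uncurry, Set.indicator, Set.mem_Ioc, h, Set.mem_setOf_eq]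
    rw [heq]
    exact ((hvm.comp measurable_snd).indicator
      ((measurableSet_lt measurable_const measurable_snd).inter
        (measurableSet_le measurable_snd measurable_fst))).aestronglyMeasurable
  have hm2 : Measurable (fun p : ℝ × ℝ => v p.2) := hvm.comp measurable_snd
  have hv2 : Integrable (fun p : ℝ × ℝ => v p.2) (μ.prod μ) := by
    rw [integrable_prod_iff hm2.aestronglyMeasurable]
    constructor
    · exact Filter.Eventually.of_forall fun x => hvi
    · exact integrable_const (μ := μ) (∫ (y : ℝ), ‖v y‖ ∂μ)
  have hint : Integrable (Function.uncurry fun t s => (Ioc (0:ℝ) t).indicator v s) (μ.prod μ) := by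
    refine hv2.norm.mono' hsm (Filter.Eventually.of_forall ?_)
    rintro ⟨t, s⟩
    simp only [Function.uncurry]
    exact norm_indicator_le_norm_self v s
  have hswap := MeasureTheory.integral_integral_swap hint
  have hL : ∫ t, (∫ s, (Ioc (0:ℝ) t).indicator v s ∂μ) ∂μ = ∫ t in Ioc (0:ℝ) T, Vtot v t := by
    apply integral_congr_ae
    filter_upwards [ae_restrict_mem measurableSet_Ioc] with t ht
    rw [hμ, setIntegral_indicator measurableSet_Ioc,
      Set.inter_eq_right.2 (Ioc_subset_Ioc_right ht.2)]
    rfl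
  have hR : ∫ s, (∫ t, (Ioc (0:ℝ) t).indicator v s ∂μ) ∂μ
      = ∫ s in Ioc (0:ℝ) T, (T - s) * v s := by
    apply integral_congr_ae
    filter_upwards [ae_restrict_mem measurableSet_Ioc] with s hs
    have heq : (fun t => (Ioc (0:ℝ) t).indicator v s) = (Ici s).indicator (fun _ => v s) := by
      funext t
      by_cases h : s ≤ t
      · simp [Set.indicator, Set.mem_Ioc, Set.mem_Ici, h, hs.1]
      · simp [Set.indicator, Set.mem_Ioc, Set.mem_Ici, h]
    rw [heq, hμ, setIntegral_indicator measurableSet_Ici, setIntegral_const]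
    have hset : Ioc (0:ℝ) T ∩ Ici s = Icc s T := by
      ext u
      simp only [Set.mem_inter_iff, Set.mem_Ioc, Set.mem_Ici, Set.mem_Icc]
      constructor
      · rintro ⟨⟨_, h2⟩, h3⟩; exact ⟨h3, h2⟩
      · rintro ⟨h1, h2⟩; exact ⟨⟨lt_of_lt_of_le hs.1 h1, h2⟩, h1⟩
    rw [hset, Measure.real, Real.volume_Icc, ENNReal.toReal_ofReal (by linarith [hs.2] : (0:ℝ) ≤ T - s)]
    simp [smul_eq_mul]
  rw [hL, hR] at hswap
  exact hswap

end Aux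

section Aux2

variable {T : ℝ}

lemma om_bdd_ae : ∀ᵐ t ∂(volume.restrict (Ioc (0:ℝ) T)), ‖om T t‖ ≤ T + 1 := by
  filter_upwards [ae_restrict_mem measurableSet_Ioc] with t ht
  rw [om, Real.norm_eq_abs, abs_le]
  obtain ⟨h1, h2⟩ := ht
  constructor <;> linarith

lemma om_aesm : AEStronglyMeasurable (om T) (volume.restrict (Ioc (0:ℝ) T)) :=
  ((continuous_const.sub continuous_id).add continuous_const).aestronglyMeasurable

lemma logv_int {v : ℝ → ℝ} (hvm : Measurable v) (hvpos : ∀ t ∈ Icc (0:ℝ) T, 0 < v t)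
    (hvi : IntegrableOn v (Ioc 0 T))
    (hlni : IntegrableOn (fun t => max (-Real.log (v t)) 0) (Ioc 0 T)) :
    IntegrableOn (fun t => Real.log (v t)) (Ioc 0 T) := by
  refine (hlni.add hvi).mono' ((Real.measurable_log.comp hvm).aestronglyMeasurable) ?_
  filter_upwards [ae_restrict_mem measurableSet_Ioc] with t ht
  have hv : 0 < v t := hvpos t ⟨le_of_lt ht.1, ht.2⟩
  have h1 : Real.log (v t) ≤ v t - 1 := Real.log_le_sub_one_of_pos hv
  rw [Real.norm_eq_abs, abs_le]
  simp only [Pi.add_apply]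
  constructor
  · have : -Real.log (v t) ≤ max (-Real.log (v t)) 0 := le_max_left _ _
    linarith [hv]
  · have : (0:ℝ) ≤ max (-Real.log (v t)) 0 := le_max_right _ _
    linarith

lemma Vtot_int {v : ℝ → ℝ} (hvi : IntegrableOn v (Ioc 0 T)) :
    IntegrableOn (fun t => Vtot v t) (Ioc 0 T) := by
  have hicc : IntegrableOn v (Icc 0 T) := (integrableOn_Icc_iff_integrableOn_Ioc).2 hvi
  exact ((intervalIntegral.continuousOn_primitive (μ := volume) hicc).integrableOn_Icc
    (μ := volume)).mono_set Ioc_subset_Icc_self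

lemma Jcost_eq {d : ℕ} (hT : 0 < T) (x : ℝ) (r : ℝ → ℝ) (θ y : ℝ → E d) {v : ℝ → ℝ}
    (hvm : Measurable v) (hvpos : ∀ t ∈ Icc (0:ℝ) T, 0 < v t)
    (hvi : IntegrableOn v (Ioc 0 T))
    (hlni : IntegrableOn (fun t => max (-Real.log (v t)) 0) (Ioc 0 T)) :
    Jcost T x r θ y v = (T + 1) * Real.log x
      + (∫ t in Ioc (0:ℝ) T, om T t * (r t + ⟪y t, θ t⟫ - ‖y t‖ ^ 2 / 2))
      + (∫ t in Ioc (0:ℝ) T, (Real.log (v t) - om T t * v t)) := by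
  have hlog := logv_int hvm hvpos hvi hlni
  have hVt := Vtot_int (T := T) hvi
  have homv : IntegrableOn (fun t => om T t * v t) (Ioc 0 T) :=
    Integrable.bdd_mul hvi om_aesm om_bdd_ae
  have hTv : IntegrableOn (fun t => (T - t) * v t) (Ioc 0 T) := by
    refine Integrable.bdd_mul hvi (c := T) ((continuous_const.sub continuous_id).aestronglyMeasurable) ?_
    filter_upwards [ae_restrict_mem measurableSet_Ioc] with t ht
    rw [Real.norm_eq_abs, abs_le]
    obtain ⟨h1, h2⟩ := ht
    constructor <;> linarith
  have h1 : (∫ t in Ioc (0:ℝ) T, (Real.log (v t) - Vtot v t))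
      = (∫ t in Ioc (0:ℝ) T, Real.log (v t)) - ∫ t in Ioc (0:ℝ) T, Vtot v t :=
    integral_sub hlog hVt
  have h2 : (∫ t in Ioc (0:ℝ) T, (Real.log (v t) - om T t * v t))
      = (∫ t in Ioc (0:ℝ) T, Real.log (v t)) - ∫ t in Ioc (0:ℝ) T, om T t * v t :=
    integral_sub hlog homv
  have h3 : (∫ t in Ioc (0:ℝ) T, om T t * v t)
      = (∫ t in Ioc (0:ℝ) T, (T - t) * v t) + ∫ t in Ioc (0:ℝ) T, v t := by
    rw [← integral_add hTv hvi]
    apply setIntegral_congr_fun measurableSet_Ioc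
    intro t _
    simp only [om]; ring
  have h4 := integral_Vtot hT hvm hvi
  have h5 : Vtot v T = ∫ t in Ioc (0:ℝ) T, v t := rfl
  rw [Jcost, h1, h2, h3, h4, h5]
  ring

lemma log_ineq {v c : ℝ} (hv : 0 < v) (hc : 0 < c) :
    Real.log v - c * v ≤ -Real.log c - 1 := by
  have h := Real.log_le_sub_one_of_pos (mul_pos hc hv)
  rw [Real.log_mul hc.ne' hv.ne'] at h
  linarith

lemma part4_aux (hT : 0 < T) {z k : ℝ} (hz0 : 0 < z) (hz1 : z < 1)
    (hk0 : 0 < k) (hkz : k ≤ z) :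
    (Real.log (1 - k) + T * Real.log k ≤
      Real.log (1 - min (T / (T + 1)) z) + T * Real.log (min (T / (T + 1)) z)) ∧
    (Real.log (1 - k) + T * Real.log k =
      Real.log (1 - min (T / (T + 1)) z) + T * Real.log (min (T / (T + 1)) z) →
        k = min (T / (T + 1)) z) := by
  set f : ℝ → ℝ := fun u => Real.log (1 - u) + T * Real.log u with hf
  set m : ℝ := T / (T + 1) with hm
  have hT1 : (0:ℝ) < T + 1 := by linarith
  have hm0 : 0 < m := div_pos hT hT1
  have hm1 : m < 1 := (div_lt_one hT1).2 (by linarith)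
  have hderiv : ∀ x ∈ Ioo (0:ℝ) 1, HasDerivAt f (T / x - 1 / (1 - x)) x := by
    intro x hx
    have hx1 : (1:ℝ) - x ≠ 0 := by have := hx.2; intro h; linarith [h]
    have h1 : HasDerivAt (fun u : ℝ => 1 - u) (-1) x := by
      simpa using (hasDerivAt_id x).const_sub 1
    have h2 : HasDerivAt (fun u : ℝ => Real.log (1 - u)) (-1 / (1 - x)) x := h1.log hx1
    have h3 : HasDerivAt (fun u : ℝ => T * Real.log u) (T * x⁻¹) x :=
      (Real.hasDerivAt_log hx.1.ne').const_mul T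
    have := h2.add h3
    convert this using 1
    all_goals try rfl
    field_simp
    ring
  have hcont : ∀ x ∈ Ioo (0:ℝ) 1, ContinuousAt f x := fun x hx => (hderiv x hx).continuousAt
  have hmono : StrictMonoOn f (Ioc 0 m) := by
    apply strictMonoOn_of_deriv_pos (convex_Ioc 0 m)
    · exact fun x hx => (hcont x ⟨hx.1, lt_of_le_of_lt hx.2 hm1⟩).continuousWithinAt
    · intro x hx
      rw [interior_Ioc] at hx
      have hx1 : x < 1 := lt_trans hx.2 hm1
      rw [(hderiv x ⟨hx.1, hx1⟩).deriv]
      have hxm : x * (T + 1) < T := by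
        have := (lt_div_iff₀ hT1).1 (lt_of_lt_of_le hx.2 (le_refl m))
        linarith [hx.2, (lt_div_iff₀ hT1).1 hx.2]
      have h1 : 1 / (1 - x) < T / x := by
        rw [div_lt_div_iff₀ (by linarith) hx.1]
        nlinarith
      linarith
  have hanti : StrictAntiOn f (Icc m z) := by
    apply strictAntiOn_of_deriv_neg (convex_Icc m z)
    · exact fun x hx => (hcont x ⟨lt_of_lt_of_le hm0 hx.1, lt_of_le_of_lt hx.2 hz1⟩).continuousWithinAt
    · intro x hx
      rw [interior_Icc] at hx
      have hx0 : 0 < x := lt_trans hm0 hx.1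
      have hx1 : x < 1 := lt_trans hx.2 hz1
      rw [(hderiv x ⟨hx0, hx1⟩).deriv]
      have hxm : T < x * (T + 1) := by
        have := (div_lt_iff₀ hT1).1 hx.1
        linarith
      have h1 : T / x < 1 / (1 - x) := by
        rw [div_lt_div_iff₀ hx0 (by linarith)]
        nlinarith
      linarith
  rcases le_total m z with hmz | hzm
  · rw [min_eq_left hmz]
    rcases lt_trichotomy k m with hkm | hkm | hkm
    · have := hmono ⟨hk0, le_of_lt hkm⟩ ⟨hm0, le_refl m⟩ hkm
      exact ⟨le_of_lt this, fun he => absurd he (ne_of_lt this)⟩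
    · exact ⟨le_of_eq (by rw [hkm]), fun _ => hkm⟩
    · have := hanti ⟨le_refl m, hmz⟩ ⟨le_of_lt hkm, hkz⟩ hkm
      exact ⟨le_of_lt this, fun he => absurd he (ne_of_lt this)⟩
  · rw [min_eq_right hzm]
    rcases lt_trichotomy k z with hkz' | hkz' | hkz'
    · have := hmono ⟨hk0, hkz.trans hzm⟩ ⟨hz0, hzm⟩ hkz'
      exact ⟨le_of_lt this, fun he => absurd he (ne_of_lt this)⟩
    · exact ⟨le_of_eq (by rw [hkz']), fun _ => hkz'⟩
    · exact absurd hkz' (not_lt.2 hkz)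

end Aux2

set_option maxHeartbeats 2000000 in
/-- Corollary 4.3 of the paper. -/
theorem stmt4 {d : ℕ} (hd : 1 ≤ d) {T : ℝ} (hT : 0 < T)
    (θ : ℝ → E d) (hθm : Measurable θ)
    (hθ2 : IntegrableOn (fun t => ‖θ t‖ ^ 2) (Set.Ioc 0 T))
    {a qa : ℝ} (ha0 : 0 < a) (ha2 : a < 1 / 2) (hqneg : qa < 0)
    (hquant : (∫ s in Set.Iic qa, Real.exp (-s ^ 2 / 2)) = a * Real.sqrt (2 * π))
    (r : ℝ → ℝ) (hr : IntegrableOn r (Set.Ioc 0 T)) {x : ℝ} (hx : 0 < x)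
    (hθ0 : nrm θ T = 0)
    {z : ℝ} (hz0 : 0 < z) (hz1 : z < 1) :
    Admiss T (fun _ => (0 : E d)) (vk T (min (T / (T + 1)) z)) ∧
    VaROK T θ (fun _ => (0 : E d)) (vk T (min (T / (T + 1)) z)) qa z ∧
    (∀ (y : ℝ → E d) (v : ℝ → ℝ), Admiss T y v → VaROK T θ y v qa z →
      Jcost T x r θ y v ≤ Jcost T x r θ (fun _ => (0 : E d)) (vk T (min (T / (T + 1)) z))) ∧
    ∀ k ∈ Set.Ioc (0:ℝ) z,
      (Real.log (1 - k) + T * Real.log k ≤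
        Real.log (1 - min (T / (T + 1)) z) + T * Real.log (min (T / (T + 1)) z)) ∧
      (Real.log (1 - k) + T * Real.log k =
        Real.log (1 - min (T / (T + 1)) z) + T * Real.log (min (T / (T + 1)) z) →
          k = min (T / (T + 1)) z) := by
  have hT1 : (0:ℝ) < T + 1 := by linarith
  have hm0 : 0 < T / (T + 1) := div_pos hT hT1
  have hm1 : T / (T + 1) < 1 := (div_lt_one hT1).2 (by linarith)
  set γ : ℝ := min (T / (T + 1)) z with hγ
  clear_value γ
  have hγ0 : 0 < γ := by rw [hγ]; exact lt_min hm0 hz0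
  have hγm : γ ≤ T / (T + 1) := by rw [hγ]; exact min_le_left _ _
  have hγz : γ ≤ z := by rw [hγ]; exact min_le_right _ _
  have hγ1 : γ < 1 := lt_of_le_of_lt hγm hm1
  -- admissibility data for the candidate strategy
  have hvst_meas : Measurable (vk T γ) := by
    unfold vk
    exact Measurable.div measurable_const (measurable_const.sub (measurable_id.mul_const _))
  have hvst_pos : ∀ t ∈ Icc (0:ℝ) T, 0 < vk T γ t := fun t ht =>
    div_pos hγ0 (denomPos hT hγ0 hγ1 ht.1 ht.2)
  have hvst_contOn : ContinuousOn (vk T γ) (Icc 0 T) := vk_contOn hT hγ0 hγ1 le_rfl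
  have hvst_int : IntegrableOn (vk T γ) (Ioc 0 T) :=
    hvst_contOn.integrableOn_Icc.mono_set Ioc_subset_Icc_self
  have hvst_log : ContinuousOn (fun t => Real.log (vk T γ t)) (Icc 0 T) :=
    hvst_contOn.log (fun t ht => (hvst_pos t ht).ne')
  have hvst_lni : IntegrableOn (fun t => max (-Real.log (vk T γ t)) 0) (Ioc 0 T) := by
    have hc : ContinuousOn (fun t => max (-Real.log (vk T γ t)) 0) (Icc 0 T) :=
      ContinuousOn.sup (hvst_log.neg) continuousOn_const
    exact hc.integrableOn_Icc.mono_set Ioc_subset_Icc_self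
  have hAdmStar : Admiss T (fun _ => (0 : E d)) (vk T γ) := by
    refine ⟨measurable_const, ?_, hvst_meas, hvst_pos, hvst_int, hvst_lni⟩
    simpa using (integrableOn_zero : IntegrableOn (fun _ : ℝ => (0:ℝ)) (Ioc 0 T) volume)
  have hVtotvk : ∀ t ∈ Icc (0:ℝ) T, Vtot (vk T γ) t = Real.log T - Real.log (T - t * γ) :=
    fun t ht => Vtot_vk hT hγ0 hγ1 ht.1 ht.2
  have hVaRStar : VaROK T θ (fun _ => (0 : E d)) (vk T γ) qa z := by
    intro t ht
    have hnrm : nrm (fun _ => (0 : E d)) t = 0 := by simp [nrm]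
    have hipr : ipr (fun _ => (0 : E d)) θ t = 0 := by simp [ipr]
    rw [hnrm, hipr, hVtotvk t ht]
    have hd : 0 < T - t * γ := denomPos hT hγ0 hγ1 ht.1 ht.2
    have h1 : 1 - z ≤ (T - t * γ) / T := by
      rw [le_div_iff₀ hT]
      nlinarith [mul_le_mul_of_nonneg_right ht.2 (le_of_lt hγ0),
        mul_le_mul_of_nonneg_left hγz (le_of_lt hT)]
    have h2 := Real.log_le_log (by linarith) h1
    rw [Real.log_div hd.ne' hT.ne'] at h2
    norm_num
    linarith
  refine ⟨hAdmStar, hVaRStar, ?_, ?_⟩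
  · -- optimality
    intro y v hAdm hVaR
    obtain ⟨hym, hy2, hvm, hvpos, hvi, hlni⟩ := hAdm
    -- θ vanishes a.e.
    have hθae : ∀ᵐ s ∂(volume.restrict (Ioc (0:ℝ) T)), θ s = 0 := by
      have hnn : 0 ≤ᵐ[volume.restrict (Ioc (0:ℝ) T)] fun s => ‖θ s‖ ^ 2 :=
        Filter.Eventually.of_forall fun s => sq_nonneg _
      have h0 : (∫ s in Ioc (0:ℝ) T, ‖θ s‖ ^ 2) = 0 := by
        have hle : (∫ s in Ioc (0:ℝ) T, ‖θ s‖ ^ 2) ≤ 0 := Real.sqrt_eq_zero'.1 hθ0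
        have hge : 0 ≤ ∫ s in Ioc (0:ℝ) T, ‖θ s‖ ^ 2 :=
          setIntegral_nonneg measurableSet_Ioc fun s _ => sq_nonneg _
        linarith
      have := (integral_eq_zero_iff_of_nonneg_ae hnn hθ2).1 h0
      filter_upwards [this] with s hs
      have : ‖θ s‖ ^ 2 = 0 := hs
      simpa using sq_eq_zero_iff.1 this
    have hip_ae : (fun s => ⟪y s, θ s⟫) =ᵐ[volume.restrict (Ioc (0:ℝ) T)] 0 := by
      filter_upwards [hθae] with s hs
      simp [hs]
    have homr : IntegrableOn (fun t => om T t * r t) (Ioc 0 T) :=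
      Integrable.bdd_mul hr om_aesm om_bdd_ae
    have hipint : Integrable (fun s => ⟪y s, θ s⟫) (volume.restrict (Ioc (0:ℝ) T)) :=
      (integrable_zero _ _ _).congr hip_ae.symm
    have homip : Integrable (fun t => om T t * ⟪y t, θ t⟫) (volume.restrict (Ioc (0:ℝ) T)) :=
      Integrable.bdd_mul hipint om_aesm om_bdd_ae
    have homy : Integrable (fun t => om T t * (‖y t‖ ^ 2 / 2)) (volume.restrict (Ioc (0:ℝ) T)) :=
      Integrable.bdd_mul (hy2.div_const 2) om_aesm om_bdd_ae
    have hLint : Integrable (fun t => om T t * (r t + ⟪y t, θ t⟫ - ‖y t‖ ^ 2 / 2))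
        (volume.restrict (Ioc (0:ℝ) T)) := by
      have heq : (fun t => om T t * (r t + ⟪y t, θ t⟫ - ‖y t‖ ^ 2 / 2))
          = fun t => om T t * r t + om T t * ⟪y t, θ t⟫ - om T t * (‖y t‖ ^ 2 / 2) := by
        funext t; ring
      rw [heq]
      exact (homr.add homip).sub homy
    have hint1 : (∫ t in Ioc (0:ℝ) T, om T t * (r t + ⟪y t, θ t⟫ - ‖y t‖ ^ 2 / 2))
        ≤ ∫ t in Ioc (0:ℝ) T, om T t * r t := by
      apply integral_mono_ae hLint homr
      filter_upwards [hθae, ae_restrict_mem measurableSet_Ioc] with t hθt ht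
      have h1 : ⟪y t, θ t⟫ = 0 := by simp [hθt]
      have h2 : (0:ℝ) ≤ om T t := by rw [om]; linarith [ht.2]
      have h3 : (0:ℝ) ≤ ‖y t‖ ^ 2 / 2 := by positivity
      exact mul_le_mul_of_nonneg_left (by rw [h1]; linarith) h2
    -- the consumption part
    set lam : ℝ := T / γ - (T + 1) with hlam
    clear_value lam
    have hlam0 : 0 ≤ lam := by
      rw [hlam, sub_nonneg, le_div_iff₀ hγ0]
      nlinarith [(le_div_iff₀ hT1).1 hγm]
    have hvkinv : ∀ t ∈ Ioc (0:ℝ) T, vk T γ t = (T / γ - t)⁻¹ ∧ 0 < T / γ - t := by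
      intro t ht
      have hd : 0 < T - t * γ := denomPos hT hγ0 hγ1 (le_of_lt ht.1) ht.2
      have he : T / γ - t = (T - t * γ) / γ := by field_simp
      constructor
      · rw [vk, he, inv_div]
      · rw [he]; positivity
    have hptwise : ∀ᵐ t ∂(volume.restrict (Ioc (0:ℝ) T)),
        Real.log (v t) - om T t * v t ≤
          (Real.log (vk T γ t) - om T t * vk T γ t) + lam * (v t - vk T γ t) := by
      filter_upwards [ae_restrict_mem measurableSet_Ioc] with t ht
      obtain ⟨hveq, hcpos⟩ := hvkinv t ht
      have hvt : 0 < v t := hvpos t ⟨le_of_lt ht.1, ht.2⟩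
      have h1 : Real.log (v t) - (T / γ - t) * v t ≤ -Real.log (T / γ - t) - 1 :=
        log_ineq hvt hcpos
      have h2 : Real.log (vk T γ t) = -Real.log (T / γ - t) := by rw [hveq, Real.log_inv]
      have h3 : (T / γ - t) * vk T γ t = 1 := by
        rw [hveq]
        exact mul_inv_cancel₀ hcpos.ne'
      have h5 : om T t = T / γ - t - lam := by rw [om, hlam]; ring
      rw [h5, h2]
      nlinarith [h1, h3]
    have hvklog_int : IntegrableOn (fun t => Real.log (vk T γ t)) (Ioc 0 T) :=
      hvst_log.integrableOn_Icc.mono_set Ioc_subset_Icc_self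
    have homvk : IntegrableOn (fun t => om T t * vk T γ t) (Ioc 0 T) :=
      Integrable.bdd_mul hvst_int om_aesm om_bdd_ae
    have homv : IntegrableOn (fun t => om T t * v t) (Ioc 0 T) :=
      Integrable.bdd_mul hvi om_aesm om_bdd_ae
    have hlogv := logv_int hvm hvpos hvi hlni
    have hRint : Integrable (fun t =>
        (Real.log (vk T γ t) - om T t * vk T γ t) + lam * (v t - vk T γ t))
        (volume.restrict (Ioc (0:ℝ) T)) :=
      (hvklog_int.sub homvk).add ((hvi.sub hvst_int).const_mul lam)
    have hVv : Vtot v T = ∫ t in Ioc (0:ℝ) T, v t := rfl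
    have hVvk : Vtot (vk T γ) T = ∫ t in Ioc (0:ℝ) T, vk T γ t := rfl
    have hIa : Integrable (fun t => Real.log (vk T γ t) - om T t * vk T γ t)
        (volume.restrict (Ioc (0:ℝ) T)) := hvklog_int.sub homvk
    have hIb : Integrable (fun t => lam * (v t - vk T γ t))
        (volume.restrict (Ioc (0:ℝ) T)) := (hvi.sub hvst_int).const_mul lam
    have hIL : Integrable (fun t => Real.log (v t) - om T t * v t)
        (volume.restrict (Ioc (0:ℝ) T)) := hlogv.sub homv
    have hint2 : (∫ t in Ioc (0:ℝ) T, (Real.log (v t) - om T t * v t))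
        ≤ (∫ t in Ioc (0:ℝ) T, (Real.log (vk T γ t) - om T t * vk T γ t))
          + lam * (Vtot v T - Vtot (vk T γ) T) := by
      have hm := integral_mono_ae hIL hRint hptwise
      rw [integral_add hIa hIb, integral_const_mul lam, integral_sub hvi hvst_int] at hm
      rw [hVv, hVvk]
      exact hm
    have hVvT : Vtot v T ≤ -Real.log (1 - z) := by
      have h := hVaR T ⟨le_of_lt hT, le_rfl⟩
      have hipr0 : ipr y θ T = 0 := by
        rw [ipr]
        exact integral_eq_zero_of_ae hip_ae
      have h1 : 0 ≤ nrm y T := Real.sqrt_nonneg _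
      nlinarith [abs_nonneg qa, sq_nonneg (nrm y T), mul_nonneg (abs_nonneg qa) h1]
    have hVvkT : Vtot (vk T γ) T = -Real.log (1 - γ) := by
      rw [hVtotvk T ⟨le_of_lt hT, le_rfl⟩]
      have he : T - T * γ = T * (1 - γ) := by ring
      rw [he, Real.log_mul hT.ne' (by linarith : (1:ℝ) - γ ≠ 0)]
      ring
    have hslack : lam * (Vtot v T - Vtot (vk T γ) T) ≤ 0 := by
      rcases le_total (T / (T + 1)) z with hmz | hzm
      · have hγe : γ = T / (T + 1) := by rw [hγ, min_eq_left hmz]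
        have hlz : lam = 0 := by
          rw [hlam, hγe, sub_eq_zero]
          field_simp
        rw [hlz, zero_mul]
      · have hγe : γ = z := by rw [hγ, min_eq_right hzm]
        apply mul_nonpos_of_nonneg_of_nonpos hlam0
        rw [hVvkT, hγe]
        linarith
    have hJ1 := Jcost_eq hT x r θ y hvm hvpos hvi hlni
    have hJ2 := Jcost_eq hT x r θ (fun _ => (0 : E d)) hvst_meas hvst_pos hvst_int hvst_lni
    rw [hJ1, hJ2]
    have hsimp : (∫ t in Ioc (0:ℝ) T,
        om T t * (r t + ⟪(fun _ => (0 : E d)) t, θ t⟫ - ‖(fun _ => (0 : E d)) t‖ ^ 2 / 2))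
        = ∫ t in Ioc (0:ℝ) T, om T t * r t := by
      apply setIntegral_congr_fun measurableSet_Ioc
      intro t _
      simp
    rw [hsimp]
    have h4 : (∫ t in Ioc (0:ℝ) T, (Real.log (v t) - om T t * v t))
        ≤ ∫ t in Ioc (0:ℝ) T, (Real.log (vk T γ t) - om T t * vk T γ t) := by
      linarith [hint2, hslack]
    exact add_le_add (add_le_add_right hint1 _) h4
  · intro k hk
    rw [hγ]
    exact part4_aux hT hz0 hz1 hk.1 hk.2
end
end

section
/- For every b > 0, the supremum of I(f) over f ∈ W_{0,b}[0,T] equals −T ln T − T ln(e^b/(e^b − 1)), and it is attained at the function f*(t) = ln( T e^b / (T e^b − t(e^b − 1)) ), which belongs to W_{0,b}[0,T]. -/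
open MeasureTheory Real Set Filter

noncomputable section

/-- The class W_{0,b}[0,T]: differentiable f on [0,T] with f(0)=0, f(T)=b, whose
derivative f' is positive and cadlag on [0,T] with ∫₀^T (ln f'(t))_− dt < ∞. -/
def WSp (T b : ℝ) (f f' : ℝ → ℝ) : Prop :=
  f 0 = 0 ∧ f T = b ∧
    (∀ t ∈ Set.Icc (0:ℝ) T, HasDerivWithinAt f (f' t) (Set.Icc 0 T) t) ∧
    (∀ t ∈ Set.Icc (0:ℝ) T, 0 < f' t) ∧
    (∀ t ∈ Set.Ico (0:ℝ) T, ContinuousWithinAt f' (Set.Ici t) t) ∧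
    (∀ t ∈ Set.Ioc (0:ℝ) T, ∃ L : ℝ, Filter.Tendsto f' (nhdsWithin t (Set.Iio t)) (nhds L)) ∧
    IntegrableOn (fun t => max (-Real.log (f' t)) 0) (Set.Ioc 0 T)

/-- I(f) = ∫₀^T (ln ḟ(t) − f(t)) dt -/
def Ifun (T : ℝ) (f f' : ℝ → ℝ) : ℝ :=
  ∫ t in Set.Ioc (0:ℝ) T, (Real.log (f' t) - f t)

lemma bdd_of_cadlag {T : ℝ} (g : ℝ → ℝ)
    (hr : ∀ t ∈ Set.Ico (0:ℝ) T, ContinuousWithinAt g (Set.Ici t) t)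
    (hl : ∀ t ∈ Set.Ioc (0:ℝ) T, ∃ L : ℝ, Filter.Tendsto g (nhdsWithin t (Set.Iio t)) (nhds L)) :
    ∃ M : ℝ, ∀ t ∈ Set.Icc (0:ℝ) T, |g t| ≤ M := by
  have key : ∀ x ∈ Icc (0:ℝ) T, ∃ M : ℝ, ∀ᶠ y in nhdsWithin x (Icc 0 T), |g y| ≤ M := by
    intro x hx
    have hright : ∃ M1 : ℝ, ∀ᶠ y in nhdsWithin x (Icc 0 T ∩ Ici x), |g y| ≤ M1 := by
      rcases lt_or_eq_of_le hx.2 with h | h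
      · refine ⟨|g x| + 1, ?_⟩
        have habs : Filter.Tendsto (fun y => |g y|) (nhdsWithin x (Ici x)) (nhds |g x|) :=
          continuous_abs.continuousAt.tendsto.comp (hr x ⟨hx.1, h⟩).tendsto
        exact (habs.eventually (eventually_le_nhds (lt_add_one |g x|))).filter_mono
          (nhdsWithin_mono x inter_subset_right)
      · refine ⟨|g x|, eventually_nhdsWithin_of_forall ?_⟩
        intro y hy
        have : y = x := le_antisymm (h ▸ hy.1.2) hy.2
        rw [this]
    have hleft : ∃ M2 : ℝ, ∀ᶠ y in nhdsWithin x (Icc 0 T ∩ Iio x), |g y| ≤ M2 := by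
      rcases lt_or_eq_of_le hx.1 with h | h
      · obtain ⟨L, hL⟩ := hl x ⟨h, hx.2⟩
        refine ⟨|L| + 1, ?_⟩
        have habs : Filter.Tendsto (fun y => |g y|) (nhdsWithin x (Iio x)) (nhds |L|) :=
          continuous_abs.continuousAt.tendsto.comp hL
        exact (habs.eventually (eventually_le_nhds (lt_add_one |L|))).filter_mono
          (nhdsWithin_mono x inter_subset_right)
      · refine ⟨0, eventually_nhdsWithin_of_forall ?_⟩
        intro y hy
        exact absurd (hy.2.trans_le (h ▸ hy.1.1)) (lt_irrefl y)
    obtain ⟨M1, h1⟩ := hright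
    obtain ⟨M2, h2⟩ := hleft
    refine ⟨max M1 M2, ?_⟩
    have hsplit : nhdsWithin x (Icc 0 T) =
        nhdsWithin x (Icc 0 T ∩ Iio x) ⊔ nhdsWithin x (Icc 0 T ∩ Ici x) := by
      rw [← nhdsWithin_union, ← inter_union_distrib_left, Iio_union_Ici, inter_univ]
    rw [hsplit, eventually_sup]
    exact ⟨h2.mono fun y hy => hy.trans (le_max_right _ _),
      h1.mono fun y hy => hy.trans (le_max_left _ _)⟩
  have := isCompact_Icc (a := (0:ℝ)) (b := T)
  refine this.induction_on (p := fun s => ∃ M : ℝ, ∀ t ∈ s, |g t| ≤ M) ⟨0, by simp⟩ ?_ ?_ ?_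
  · rintro s t hst ⟨M, hM⟩; exact ⟨M, fun y hy => hM y (hst hy)⟩
  · rintro s t ⟨M1, h1⟩ ⟨M2, h2⟩
    exact ⟨max M1 M2, fun y hy => hy.elim (fun h => (h1 y h).trans (le_max_left _ _))
      (fun h => (h2 y h).trans (le_max_right _ _))⟩
  · intro x hx
    obtain ⟨M, hM⟩ := key x hx
    exact ⟨{y | |g y| ≤ M}, hM, M, fun y hy => hy⟩

lemma wsp_facts {T b : ℝ} (hT : 0 < T) {f f' : ℝ → ℝ} (hW : WSp T b f f') :
    ContinuousOn f (Set.Icc 0 T) ∧ IntegrableOn f (Set.Ioc 0 T) ∧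
    AEStronglyMeasurable f' (volume.restrict (Set.Ioc 0 T)) ∧
    (∃ M : ℝ, ∀ t ∈ Set.Icc (0:ℝ) T, |f' t| ≤ M) ∧
    IntegrableOn f' (Set.Ioc 0 T) ∧
    IntegrableOn (fun t => Real.log (f' t)) (Set.Ioc 0 T) := by
  obtain ⟨hf0, hfT, hderiv, hpos, hrc, hll, hint⟩ := hW
  have hcontf : ContinuousOn f (Icc 0 T) := fun t ht => (hderiv t ht).continuousWithinAt
  have hfint : IntegrableOn f (Ioc 0 T) :=
    (hcontf.integrableOn_Icc).mono_set Ioc_subset_Icc_self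
  -- a.e. measurability of f'
  have hd : ∀ t ∈ Ico (0:ℝ) T, derivWithin f (Ici t) t = f' t := by
    intro t ht
    have h1 : Icc (0:ℝ) T ∈ nhdsWithin t (Ici t) := by
      rw [mem_nhdsWithin]
      exact ⟨Iio T, isOpen_Iio, ht.2, fun y hy => ⟨le_trans ht.1 hy.2, le_of_lt hy.1⟩⟩
    exact ((hderiv t (Ico_subset_Icc_self ht)).mono_of_mem_nhdsWithin h1).derivWithin
      ((uniqueDiffOn_Ici t) t self_mem_Ici)
  have hne : ∀ᵐ t ∂(volume : Measure ℝ), t ≠ T := by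
    rw [ae_iff]
    have : {x : ℝ | ¬ x ≠ T} = {T} := by ext x; simp
    rw [this]; exact Real.volume_singleton
  have hae : (fun t => derivWithin f (Ici t) t) =ᵐ[volume.restrict (Set.Ioc 0 T)] f' := by
    filter_upwards [ae_restrict_mem measurableSet_Ioc, ae_restrict_of_ae hne] with t ht htne
    exact hd t ⟨ht.1.le, lt_of_le_of_ne ht.2 htne⟩
  have hmeas : AEStronglyMeasurable f' (volume.restrict (Set.Ioc 0 T)) :=
    (stronglyMeasurable_derivWithin_Ici f).aestronglyMeasurable.congr hae
  obtain ⟨M, hM⟩ := bdd_of_cadlag f' hrc hll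
  have hM0 : 0 ≤ M := le_trans (abs_nonneg _) (hM 0 ⟨le_rfl, hT.le⟩)
  have hconstM : IntegrableOn (fun _ : ℝ => M) (Ioc 0 T) :=
    integrableOn_const measure_Ioc_lt_top.ne
  have hf'int : IntegrableOn f' (Ioc 0 T) := by
    refine Integrable.mono' hconstM hmeas ?_
    filter_upwards [ae_restrict_mem measurableSet_Ioc] with t ht
    exact hM t (Ioc_subset_Icc_self ht)
  have hlogint : IntegrableOn (fun t => Real.log (f' t)) (Ioc 0 T) := by
    have haesm : AEStronglyMeasurable (fun t => Real.log (f' t)) (volume.restrict (Ioc 0 T)) :=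
      (Real.measurable_log.comp_aemeasurable hmeas.aemeasurable).aestronglyMeasurable
    have hdom : IntegrableOn (fun t => max (Real.log M) 0 + max (-Real.log (f' t)) 0)
        (Ioc 0 T) := by
      exact (integrableOn_const measure_Ioc_lt_top.ne).add hint
    refine Integrable.mono' hdom haesm ?_
    filter_upwards [ae_restrict_mem measurableSet_Ioc] with t ht
    have ht' : t ∈ Icc (0:ℝ) T := Ioc_subset_Icc_self ht
    have hp := hpos t ht'
    have hle : Real.log (f' t) ≤ Real.log M :=
      Real.log_le_log hp (le_trans (le_abs_self _) (hM t ht'))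
    rw [Real.norm_eq_abs, abs_le]
    constructor
    · have : -Real.log (f' t) ≤ max (-Real.log (f' t)) 0 := le_max_left _ _
      have h0 : (0:ℝ) ≤ max (Real.log M) 0 := le_max_right _ _
      linarith
    · have : Real.log M ≤ max (Real.log M) 0 := le_max_left _ _
      have h0 : (0:ℝ) ≤ max (-Real.log (f' t)) 0 := le_max_right _ _
      linarith
  exact ⟨hcontf, hfint, hmeas, ⟨M, hM⟩, hf'int, hlogint⟩


/-- Lemma A.1 of the paper. -/
theorem stmt13 {T b : ℝ} (hT : 0 < T) (hb : 0 < b) :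
    WSp T b
      (fun t => Real.log (T * Real.exp b / (T * Real.exp b - t * (Real.exp b - 1))))
      (fun t => (Real.exp b - 1) / (T * Real.exp b - t * (Real.exp b - 1))) ∧
    Ifun T
      (fun t => Real.log (T * Real.exp b / (T * Real.exp b - t * (Real.exp b - 1))))
      (fun t => (Real.exp b - 1) / (T * Real.exp b - t * (Real.exp b - 1)))
      = -(T * Real.log T) - T * Real.log (Real.exp b / (Real.exp b - 1)) ∧
    ∀ f f' : ℝ → ℝ, WSp T b f f' →
      Ifun T f f' ≤ -(T * Real.log T) - T * Real.log (Real.exp b / (Real.exp b - 1)) := by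
  set c : ℝ := Real.exp b - 1 with hcdef
  set K : ℝ := T * Real.exp b with hKdef
  have hc : 0 < c := by
    have : (1:ℝ) < Real.exp b := by
      rw [← Real.exp_zero]; exact Real.exp_lt_exp.2 hb
    simpa [hcdef] using this
  have hK : 0 < K := mul_pos hT (Real.exp_pos b)
  have hden : ∀ t ∈ Icc (0:ℝ) T, 0 < K - t * c := by
    intro t ht
    have h1 : t * c ≤ T * c := mul_le_mul_of_nonneg_right ht.2 hc.le
    have h2 : K - T * c = T := by rw [hKdef, hcdef]; ring
    linarith
  set g : ℝ → ℝ := fun t => Real.log (K / (K - t * c)) with hgdef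
  set g' : ℝ → ℝ := fun t => c / (K - t * c) with hg'def
  -- basic facts about the candidate
  have hg0 : g 0 = 0 := by simp [hgdef, div_self hK.ne']
  have hgT : g T = b := by
    have h2 : K - T * c = T := by rw [hKdef, hcdef]; ring
    rw [hgdef]
    simp only
    rw [h2, hKdef, mul_comm, mul_div_assoc, div_self hT.ne', mul_one, Real.log_exp]
  have hgderiv : ∀ t ∈ Icc (0:ℝ) T, HasDerivWithinAt g (g' t) (Icc 0 T) t := by
    intro t ht
    have hdent := hden t ht
    have h1 : HasDerivAt (fun y : ℝ => K - y * c) (-c) t := by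
      simpa using ((hasDerivAt_id t).mul_const c).const_sub K
    have h2 : HasDerivAt (fun y : ℝ => Real.log K - Real.log (K - y * c)) (g' t) t := by
      have h3 := (h1.log hdent.ne').const_sub (Real.log K)
      refine h3.congr_deriv ?_
      rw [hg'def]
      field_simp
    refine (h2.hasDerivWithinAt).congr (fun y hy => ?_) ?_
    · rw [hgdef]; exact Real.log_div hK.ne' (hden y hy).ne'
    · rw [hgdef]; exact Real.log_div hK.ne' hdent.ne'
  have hg'pos : ∀ t ∈ Icc (0:ℝ) T, 0 < g' t := fun t ht => div_pos hc (hden t ht)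
  have hg'cont : ∀ t ∈ Icc (0:ℝ) T, ContinuousAt g' t := by
    intro t ht
    exact ContinuousAt.div continuousAt_const (by fun_prop) (hden t ht).ne'
  have hg'contOn : ContinuousOn g' (Icc 0 T) := fun t ht => (hg'cont t ht).continuousWithinAt
  have hWg : WSp T b g g' := by
    refine ⟨hg0, hgT, hgderiv, hg'pos, ?_, ?_, ?_⟩
    · exact fun t ht => (hg'cont t (Ico_subset_Icc_self ht)).continuousWithinAt
    · intro t ht
      exact ⟨g' t, ((hg'cont t (Ioc_subset_Icc_self ht)).continuousWithinAt :
        ContinuousWithinAt g' (Iio t) t)⟩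
    · have : ContinuousOn (fun t => max (-Real.log (g' t)) 0) (Icc 0 T) :=
        (continuous_id.neg.max continuous_const).comp_continuousOn
          (hg'contOn.log (fun t ht => (hg'pos t ht).ne'))
      exact (this.integrableOn_Icc).mono_set Ioc_subset_Icc_self
  -- value at the candidate
  have hval : Ifun T g g' = -(T * Real.log T) - T * Real.log (Real.exp b / c) := by
    have hconst : ∀ t ∈ Ioc (0:ℝ) T,
        Real.log (g' t) - g t = Real.log c - Real.log K := by
      intro t ht
      have hdent := hden t (Ioc_subset_Icc_self ht)
      rw [hgdef, hg'def]
      simp only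
      rw [Real.log_div hc.ne' hdent.ne', Real.log_div hK.ne' hdent.ne']
      ring
    have : Ifun T g g' = ∫ _ in Ioc (0:ℝ) T, (Real.log c - Real.log K) := by
      exact setIntegral_congr_fun measurableSet_Ioc hconst
    rw [Ifun] at this ⊢
    rw [this, setIntegral_const, measureReal_def, Real.volume_Ioc, smul_eq_mul,
      ENNReal.toReal_ofReal (by linarith : (0:ℝ) ≤ T - 0)]
    have hlogK : Real.log K = Real.log T + b := by
      rw [hKdef, Real.log_mul hT.ne' (Real.exp_pos b).ne', Real.log_exp]
    have hlogq : Real.log (Real.exp b / c) = b - Real.log c := by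
      rw [Real.log_div (Real.exp_pos b).ne' hc.ne', Real.log_exp]
    rw [hlogK, hlogq]; ring
  refine ⟨hWg, hval, ?_⟩
  -- optimality
  intro f f' hW
  obtain ⟨hcontf, hfint, hmeas, ⟨M, hM⟩, hf'int, hlogfint⟩ := wsp_facts hT hW
  obtain ⟨hf0, hfT, hfderiv, hfpos, -, -, -⟩ := hW
  set S : ℝ := K / c with hSdef
  have hSrel : ∀ t : ℝ, S - t = (K - t * c) / c := by
    intro t; rw [hSdef]; field_simp
  have hpt : ∀ t ∈ Ioc (0:ℝ) T, Real.log (f' t) - f t ≤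
      (Real.log (g' t) - g t) + ((f' t - g' t) * (S - t) - (f t - g t)) := by
    intro t ht
    have ht' : t ∈ Icc (0:ℝ) T := Ioc_subset_Icc_self ht
    have hfp := hfpos t ht'
    have hgp := hg'pos t ht'
    have hdent := hden t ht'
    have h1 : Real.log (f' t / g' t) ≤ f' t / g' t - 1 :=
      Real.log_le_sub_one_of_pos (div_pos hfp hgp)
    rw [Real.log_div hfp.ne' hgp.ne'] at h1
    have h2 : f' t / g' t - 1 = (f' t - g' t) * (S - t) := by
      rw [hSrel, hg'def]
      field_simp
      rw [mul_sub (K - c * t), mul_div_cancel₀ _ (by linarith : K - c * t ≠ 0)]; ring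
    rw [h2] at h1
    linarith
  have hcontg : ContinuousOn g (Icc 0 T) := fun t ht2 => (hgderiv t ht2).continuousWithinAt
  have hgint : IntegrableOn g (Ioc 0 T) := hcontg.integrableOn_Icc.mono_set Ioc_subset_Icc_self
  have hA : IntegrableOn (fun t => Real.log (g' t) - g t) (Ioc 0 T) := by
    have : ContinuousOn (fun t => Real.log (g' t) - g t) (Icc 0 T) :=
      (hg'contOn.log fun t ht2 => (hg'pos t ht2).ne').sub hcontg
    exact this.integrableOn_Icc.mono_set Ioc_subset_Icc_self
  have hf'S : IntegrableOn (fun t => f' t * (S - t)) (Ioc 0 T) := by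
    have haesm : AEStronglyMeasurable (fun t => f' t * (S - t))
        (volume.restrict (Ioc 0 T)) :=
      hmeas.mul ((continuous_const.sub continuous_id).aestronglyMeasurable)
    refine Integrable.mono' (g := fun _ => M * (|S| + T))
      (integrableOn_const measure_Ioc_lt_top.ne) haesm ?_
    filter_upwards [ae_restrict_mem measurableSet_Ioc] with t ht2
    have ht' : t ∈ Icc (0:ℝ) T := Ioc_subset_Icc_self ht2
    rw [Real.norm_eq_abs, abs_mul]
    have h1 : |f' t| ≤ M := hM t ht'
    have h2 : |S - t| ≤ |S| + T := by
      have h3 : |S - t| ≤ |S| + |t| := by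
        calc |S - t| = |S + -t| := by ring_nf
          _ ≤ |S| + |(-t)| := abs_add_le _ _
          _ = |S| + |t| := by rw [abs_neg]
      have h4 : |t| ≤ T := abs_le.2 ⟨by linarith [ht2.1], ht2.2⟩
      linarith
    exact mul_le_mul h1 h2 (abs_nonneg _) (le_trans (abs_nonneg _) h1)
  have hg'S : IntegrableOn (fun t => g' t * (S - t)) (Ioc 0 T) :=
    ((hg'contOn.mul ((continuous_const.sub continuous_id).continuousOn)).integrableOn_Icc).mono_set
      Ioc_subset_Icc_self
  have hB : IntegrableOn (fun t => (f' t - g' t) * (S - t) - (f t - g t)) (Ioc 0 T) := by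
    have h1 : IntegrableOn (fun t => f' t * (S - t) - g' t * (S - t)) (Ioc 0 T) :=
      hf'S.sub hg'S
    have heq : (fun t => f' t * (S - t) - g' t * (S - t))
        = fun t => (f' t - g' t) * (S - t) := by funext t; ring
    rw [heq] at h1
    exact h1.sub (hfint.sub hgint)
  have hzero : ∫ t in Ioc (0:ℝ) T, ((f' t - g' t) * (S - t) - (f t - g t)) = 0 := by
    set φ : ℝ → ℝ := fun t => (f t - g t) * (S - t) with hφdef
    have hφcont : ContinuousOn φ (Icc 0 T) :=
      (hcontf.sub hcontg).mul ((continuous_const.sub continuous_id).continuousOn)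
    have hφderiv : ∀ x ∈ Ioo (0:ℝ) T, HasDerivWithinAt φ
        ((f' x - g' x) * (S - x) - (f x - g x)) (Ioi x) x := by
      intro x hx
      have hnx : Icc (0:ℝ) T ∈ nhds x := Icc_mem_nhds hx.1 hx.2
      have hdf : HasDerivAt f (f' x) x := (hfderiv x (Ioo_subset_Icc_self hx)).hasDerivAt hnx
      have hdg : HasDerivAt g (g' x) x := (hgderiv x (Ioo_subset_Icc_self hx)).hasDerivAt hnx
      have hmul := (hdf.sub hdg).mul ((hasDerivAt_id x).const_sub S)
      have h4 : (f' x - g' x) * (S - x) - (f x - g x)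
          = (f' x - g' x) * (S - x) + (f x - g x) * (-1) := by ring
      rw [h4]
      exact hmul.hasDerivWithinAt
    have hψint : IntegrableOn (fun t => (f' t - g' t) * (S - t) - (f t - g t)) (Icc 0 T) :=
      (integrableOn_Icc_iff_integrableOn_Ioc).2 hB
    have h1 := intervalIntegral.integral_eq_sub_of_hasDeriv_right_of_le_real hT.le
      hφcont hφderiv hψint
    rw [intervalIntegral.integral_of_le hT.le] at h1
    have hφT : φ T = 0 := by rw [hφdef]; simp only; rw [hfT, hgT]; ring
    have hφ0 : φ 0 = 0 := by rw [hφdef]; simp only; rw [hf0, hg0]; ring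
    rw [h1, hφT, hφ0, sub_zero]
  have hmono : Ifun T f f' ≤ ∫ t in Ioc (0:ℝ) T,
      ((Real.log (g' t) - g t) + ((f' t - g' t) * (S - t) - (f t - g t))) := by
    rw [Ifun]
    exact setIntegral_mono_on (hlogfint.sub hfint) (hA.add hB) measurableSet_Ioc hpt
  rw [MeasureTheory.integral_add hA hB, hzero, add_zero] at hmono
  calc Ifun T f f' ≤ ∫ t in Ioc (0:ℝ) T, (Real.log (g' t) - g t) := hmono
    _ = Ifun T g g' := rfl
    _ = _ := hval
end
end

section
/- Assume |q_α| > ‖θ‖_T. Then the function k_min(x) = −x‖θ‖_T − f_α(x) is strictly increasing on [0,∞) with k_min(0) = 0, and for every y ∈ L²([0,T];ℝ^d): K₁(y) ≥ k_min(‖y‖_T) ≥ 0, with K₁(y) = 0 if and only if y = 0 almost everywhere on [0,T]. -/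
open MeasureTheory Real Set Filter
open scoped RealInnerProductSpace ENNReal

noncomputable section

/-- Mills ratio ϖ(z) = e^{z²/2}∫_z^∞ e^{-s²/2} ds -/
def mills (z : ℝ) : ℝ := Real.exp (z ^ 2 / 2) * ∫ s in Set.Ioi z, Real.exp (-s ^ 2 / 2)

/-- ι_α(u) = 1/ϖ(u + |q_α|) − u -/
def iotaA (qa u : ℝ) : ℝ := 1 / mills (u + |qa|) - u

/-- F_α(z) = (∫_z^∞ e^{-s²/2} ds)/(∫_{|q_α|}^∞ e^{-s²/2} ds) -/
def Fal (qa z : ℝ) : ℝ :=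
  (∫ s in Set.Ioi z, Real.exp (-s ^ 2 / 2)) / ∫ s in Set.Ioi |qa|, Real.exp (-s ^ 2 / 2)

/-- f_α(x) = ln F_α(|q_α| + x) -/
def fal (qa x : ℝ) : ℝ := Real.log (Fal qa (|qa| + x))

/-- G₁(u,λ) -/
def G1fun {d : ℕ} (T : ℝ) (θ : ℝ → E d) (qa u lam : ℝ) : ℝ :=
  ∫ t in Set.Ioc (0:ℝ) T,
    (om T t + lam) ^ 2 * ‖θ t‖ ^ 2 / (lam * iotaA qa u + u * (om T t + lam)) ^ 2

open Classical in
/-- ρ₁(λ) = inf{u ≥ 0 : G₁(u,λ) ≤ 1}, with value +∞ if no such u exists -/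
def rho1 {d : ℕ} (T : ℝ) (θ : ℝ → E d) (qa lam : ℝ) : ℝ≥0∞ :=
  if {u : ℝ | 0 ≤ u ∧ G1fun T θ qa u lam ≤ 1}.Nonempty then
    ENNReal.ofReal (sInf {u : ℝ | 0 ≤ u ∧ G1fun T θ qa u lam ≤ 1})
  else ⊤

open Classical in
/-- ς_λ(t), with ς_λ ≡ 1 if ρ₁(λ) = +∞ -/
def sig {d : ℕ} (T : ℝ) (θ : ℝ → E d) (qa lam t : ℝ) : ℝ :=
  if rho1 T θ qa lam = ⊤ then 1
  else (rho1 T θ qa lam).toReal * (om T t + lam) /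
    (lam * iotaA qa (rho1 T θ qa lam).toReal + (rho1 T θ qa lam).toReal * (om T t + lam))

def lamMax' {d : ℕ} (T : ℝ) (θ : ℝ → E d) (qa : ℝ) : ℝ :=
  (k1 T θ + Real.sqrt (k2 T θ * (iotaA qa 0 ^ 2 - nrm θ T ^ 2) + k1 T θ ^ 2)) /
    (iotaA qa 0 ^ 2 - nrm θ T ^ 2)

/-- Φ₁(λ) = −∫₀^T ς_λ(t)|θ_t|² dt − ln F_α(|q_α| + ‖ς_λθ‖_T) -/
def Phi1 {d : ℕ} (T : ℝ) (θ : ℝ → E d) (qa lam : ℝ) : ℝ :=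
  -(∫ t in Set.Ioc (0:ℝ) T, sig T θ qa lam t * ‖θ t‖ ^ 2)
    - Real.log (Fal qa (|qa| + nrm (fun t => sig T θ qa lam t • θ t) T))

/-- K₁(y) = −(y,θ)_T − f_α(‖y‖_T) -/
def K1fun {d : ℕ} (T : ℝ) (θ y : ℝ → E d) (qa : ℝ) : ℝ :=
  -ipr y θ T - fal qa (nrm y T)


/-! ### Auxiliary lemmas for stmt19 -/

/-- the (unnormalized) Gaussian density -/
def gf19 (s : ℝ) : ℝ := Real.exp (-s ^ 2 / 2)

lemma gf19_int : MeasureTheory.Integrable gf19 := by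
  have h := integrable_exp_neg_mul_sq (b := (1/2:ℝ)) (by norm_num)
  convert h using 2 with s
  unfold gf19; ring_nf

lemma gf19_cont : Continuous gf19 := by
  unfold gf19; continuity

lemma gf19_pos (s : ℝ) : 0 < gf19 s := Real.exp_pos _

/-- the Gaussian tail integral -/
def Ig19 (z : ℝ) : ℝ := ∫ s in Set.Ioi z, gf19 s

lemma Ig19_pos (z : ℝ) : 0 < Ig19 z := by
  rw [Ig19, setIntegral_pos_iff_support_of_nonneg_ae
    (ae_of_all _ fun s => (gf19_pos s).le) gf19_int.integrableOn]
  have : Function.support gf19 = Set.univ := by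
    ext s; simp [gf19, Real.exp_ne_zero]
  rw [this, Set.univ_inter, Real.volume_Ioi]
  simp

lemma Ig19_eq (z : ℝ) : Ig19 z = Ig19 0 - ∫ t in (0:ℝ)..z, gf19 t := by
  rcases le_total 0 z with h | h
  · rw [intervalIntegral.integral_of_le h]
    have := setIntegral_union (f := gf19) (μ := volume) (s := Set.Ioc 0 z) (t := Set.Ioi z)
      Set.Ioc_disjoint_Ioi_same measurableSet_Ioi
      gf19_int.integrableOn gf19_int.integrableOn
    rw [Set.Ioc_union_Ioi_eq_Ioi h] at this
    rw [Ig19, Ig19, this]; ring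
  · rw [intervalIntegral.integral_of_ge h]
    have := setIntegral_union (f := gf19) (μ := volume) (s := Set.Ioc z 0) (t := Set.Ioi 0)
      Set.Ioc_disjoint_Ioi_same measurableSet_Ioi
      gf19_int.integrableOn gf19_int.integrableOn
    rw [Set.Ioc_union_Ioi_eq_Ioi h] at this
    rw [Ig19, Ig19, this]; ring

lemma Ig19_deriv (z : ℝ) : HasDerivAt Ig19 (-gf19 z) z := by
  have h : HasDerivAt (fun u => ∫ t in (0:ℝ)..u, gf19 t) (gf19 z) z :=
    intervalIntegral.integral_hasDerivAt_right gf19_int.intervalIntegrable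
      gf19_cont.aestronglyMeasurable.stronglyMeasurableAtFilter gf19_cont.continuousAt
  have h2 := (h.const_sub (Ig19 0))
  refine HasDerivAt.congr_of_eventuallyEq (by simpa using h2) ?_
  filter_upwards with u using Ig19_eq u

lemma Ig19_mills {z : ℝ} (hz : 0 < z) : z * Ig19 z ≤ gf19 z := by
  have hderiv : ∀ x ∈ Set.Ioi z, HasDerivAt (fun s => -gf19 s) (x * gf19 x) x := by
    intro x _
    have h1 : HasDerivAt (fun s : ℝ => -s ^ 2 / 2) (-x) x := by
      have := ((hasDerivAt_pow 2 x).neg.div_const 2)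
      exact this.congr_deriv (by ring)
    have := ((Real.hasDerivAt_exp (-x ^ 2 / 2)).comp x h1).neg
    exact this.congr_deriv (by unfold gf19; ring)
  have hint : IntegrableOn (fun s : ℝ => s * gf19 s) (Set.Ioi z) := by
    have h := integrable_mul_exp_neg_mul_sq (b := (1/2:ℝ)) (by norm_num)
    refine (h.congr ?_).integrableOn
    filter_upwards with s
    unfold gf19; ring_nf
  have htend : Tendsto (fun s : ℝ => -gf19 s) atTop (nhds 0) := by
    have h1 : Tendsto (fun s : ℝ => s ^ 2 / 2) atTop atTop :=
      (tendsto_pow_atTop two_ne_zero).atTop_div_const (by norm_num)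
    have h2 : Tendsto (fun s : ℝ => Real.exp (-(s ^ 2 / 2))) atTop (nhds 0) :=
      Real.tendsto_exp_neg_atTop_nhds_zero.comp h1
    have := h2.neg
    rw [neg_zero] at this
    refine this.congr (fun s => ?_)
    unfold gf19; ring_nf
  have key : ∫ s in Set.Ioi z, s * gf19 s = 0 - (-gf19 z) :=
    integral_Ioi_of_hasDerivAt_of_tendsto
      (gf19_cont.neg.continuousWithinAt) hderiv hint htend
  have hmono : (∫ s in Set.Ioi z, z * gf19 s) ≤ ∫ s in Set.Ioi z, s * gf19 s := by
    refine setIntegral_mono_on (gf19_int.const_mul z).integrableOn hint measurableSet_Ioi ?_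
    intro s hs
    exact mul_le_mul_of_nonneg_right (le_of_lt hs) (gf19_pos s).le
  calc z * Ig19 z = ∫ s in Set.Ioi z, z * gf19 s := by
        rw [Ig19, integral_const_mul]
    _ ≤ ∫ s in Set.Ioi z, s * gf19 s := hmono
    _ = gf19 z := by rw [key]; ring

/-- k_min written with `Ig19` -/
def km19 (c q u : ℝ) : ℝ := -(u * c) - (Real.log (Ig19 (q + u)) - Real.log (Ig19 q))

lemma km19_deriv (c q u : ℝ) :
    HasDerivAt (km19 c q) (-c + gf19 (q + u) / Ig19 (q + u)) u := by
  have h1 : HasDerivAt (fun u : ℝ => Ig19 (q + u)) (-gf19 (q + u)) u := by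
    exact ((Ig19_deriv (q + u)).comp u ((hasDerivAt_id u).const_add q)).congr_deriv (mul_one _)
  have h2 : HasDerivAt (fun u : ℝ => Real.log (Ig19 (q + u)))
      (-gf19 (q + u) / Ig19 (q + u)) u := h1.log (Ig19_pos _).ne'
  have h3 := (((hasDerivAt_id u).mul_const c)).neg.sub (h2.sub_const (Real.log (Ig19 q)))
  unfold km19
  exact h3.congr_deriv (by ring)

lemma km19_smo {c q : ℝ} (hc : 0 ≤ c) (hcq : c < q) :
    StrictMonoOn (km19 c q) (Set.Ici 0) := by
  have hq : 0 < q := hc.trans_lt hcq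
  refine strictMonoOn_of_deriv_pos (convex_Ici 0)
    (fun x _ => (km19_deriv c q x).continuousAt.continuousWithinAt) ?_
  intro x hx
  rw [interior_Ici] at hx
  rw [(km19_deriv c q x).deriv]
  have hqx : 0 < q + x := by linarith [hx.out]
  have h := Ig19_mills hqx
  have h2 : q + x ≤ gf19 (q + x) / Ig19 (q + x) := (le_div_iff₀ (Ig19_pos _)).2 h
  have : c < gf19 (q + x) / Ig19 (q + x) := by linarith [hx.out]
  linarith

lemma fal_eq19 (qa u : ℝ) :
    fal qa u = Real.log (Ig19 (|qa| + u)) - Real.log (Ig19 |qa|) := by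
  have hFal : Fal qa (|qa| + u) = Ig19 (|qa| + u) / Ig19 |qa| := rfl
  rw [fal, hFal, Real.log_div (Ig19_pos _).ne' (Ig19_pos _).ne']

/-- positivity and definiteness of the ES constraint functional K₁. -/
theorem stmt19 {d : ℕ} (hd : 1 ≤ d) {T : ℝ} (hT : 0 < T)
    (θ : ℝ → E d) (hθm : Measurable θ)
    (hθ2 : IntegrableOn (fun t => ‖θ t‖ ^ 2) (Set.Ioc 0 T))
    {a qa : ℝ} (ha0 : 0 < a) (ha2 : a < 1 / 2) (hqneg : qa < 0)
    (hquant : (∫ s in Set.Iic qa, Real.exp (-s ^ 2 / 2)) = a * Real.sqrt (2 * π))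
    (hqθ : nrm θ T < |qa|) :
    StrictMonoOn (fun u : ℝ => -(u * nrm θ T) - fal qa u) (Set.Ici 0) ∧
    (-(0 * nrm θ T) - fal qa 0 = 0) ∧
    ∀ y : ℝ → E d, L2fun T y →
      (-(nrm y T * nrm θ T) - fal qa (nrm y T) ≤ K1fun T θ y qa) ∧
      (0 ≤ -(nrm y T * nrm θ T) - fal qa (nrm y T)) ∧
      (K1fun T θ y qa = 0 ↔
        y =ᵐ[volume.restrict (Set.Ioc (0:ℝ) T)] fun _ => (0 : E d)) := by
  have hq0 : (0:ℝ) < |qa| := abs_pos.2 (ne_of_lt hqneg)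
  have hc0 : 0 ≤ nrm θ T := Real.sqrt_nonneg _
  have hkey : (fun u : ℝ => -(u * nrm θ T) - fal qa u) = km19 (nrm θ T) |qa| := by
    funext u; rw [fal_eq19]; rfl
  have hsmo : StrictMonoOn (fun u : ℝ => -(u * nrm θ T) - fal qa u) (Set.Ici 0) := by
    rw [hkey]; exact km19_smo hc0 hqθ
  have hfal0 : fal qa 0 = 0 := by rw [fal_eq19]; simp
  have hzero : -(0 * nrm θ T) - fal qa 0 = 0 := by rw [hfal0]; ring
  refine ⟨hsmo, hzero, ?_⟩
  intro y hy
  obtain ⟨hym, hy2⟩ := hy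
  have hbound_int : Integrable (fun t => (‖y t‖ ^ 2 + ‖θ t‖ ^ 2) / 2)
      (volume.restrict (Set.Ioc (0:ℝ) T)) := (hy2.add hθ2).div_const 2
  have h_inner_int : Integrable (fun t => ⟪y t, θ t⟫)
      (volume.restrict (Set.Ioc (0:ℝ) T)) := by
    refine hbound_int.mono' ((hym.inner hθm).aestronglyMeasurable)
      (ae_of_all _ fun t => ?_)
    have h1 := abs_real_inner_le_norm (y t) (θ t)
    have h2 : ‖y t‖ * ‖θ t‖ ≤ (‖y t‖ ^ 2 + ‖θ t‖ ^ 2) / 2 := by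
      nlinarith [sq_nonneg (‖y t‖ - ‖θ t‖)]
    rw [Real.norm_eq_abs]; linarith
  have h_prod_int : Integrable (fun t => ‖y t‖ * ‖θ t‖)
      (volume.restrict (Set.Ioc (0:ℝ) T)) := by
    refine hbound_int.mono' ((hym.norm.mul hθm.norm).aestronglyMeasurable)
      (ae_of_all _ fun t => ?_)
    have h2 : ‖y t‖ * ‖θ t‖ ≤ (‖y t‖ ^ 2 + ‖θ t‖ ^ 2) / 2 := by
      nlinarith [sq_nonneg (‖y t‖ - ‖θ t‖)]
    rw [Real.norm_eq_abs, abs_of_nonneg (by positivity)]; exact h2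
  have hIy : (0:ℝ) ≤ ∫ t in Set.Ioc (0:ℝ) T, ‖y t‖ ^ 2 :=
    integral_nonneg fun t => sq_nonneg _
  have hCS : ipr y θ T ≤ nrm y T * nrm θ T := by
    have step1 : ipr y θ T ≤ ∫ t in Set.Ioc (0:ℝ) T, ‖y t‖ * ‖θ t‖ :=
      integral_mono h_inner_int h_prod_int fun t => real_inner_le_norm _ _
    have hpq : (2:ℝ).HolderConjugate 2 := Real.HolderConjugate.two_two
    have h2e : ENNReal.ofReal (2:ℝ) = 2 := by norm_num
    have hyL2 : MemLp (fun t => ‖y t‖) (ENNReal.ofReal (2:ℝ))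
        (volume.restrict (Set.Ioc (0:ℝ) T)) := by
      rw [h2e]
      exact (memLp_two_iff_integrable_sq hym.norm.aestronglyMeasurable).2 hy2
    have hθL2 : MemLp (fun t => ‖θ t‖) (ENNReal.ofReal (2:ℝ))
        (volume.restrict (Set.Ioc (0:ℝ) T)) := by
      rw [h2e]
      exact (memLp_two_iff_integrable_sq hθm.norm.aestronglyMeasurable).2 hθ2
    have step2 := integral_mul_le_Lp_mul_Lq_of_nonneg hpq
      (ae_of_all _ fun t => norm_nonneg (y t)) (ae_of_all _ fun t => norm_nonneg (θ t))
      hyL2 hθL2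
    have hnrm : ∀ f : ℝ → E d,
        (∫ t in Set.Ioc (0:ℝ) T, ‖f t‖ ^ (2:ℝ)) ^ ((1:ℝ)/2) = nrm f T := by
      intro f
      have hrw : (∫ t in Set.Ioc (0:ℝ) T, ‖f t‖ ^ (2:ℝ))
          = ∫ t in Set.Ioc (0:ℝ) T, ‖f t‖ ^ 2 := by
        refine integral_congr_ae (ae_of_all _ fun t => ?_)
        show ‖f t‖ ^ (2:ℝ) = ‖f t‖ ^ (2:ℕ)
        rw [show (2:ℝ) = ((2:ℕ):ℝ) by norm_num, Real.rpow_natCast]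
      rw [hrw, nrm, Real.sqrt_eq_rpow]
    rw [hnrm, hnrm] at step2
    exact step1.trans step2
  have hlower : -(nrm y T * nrm θ T) - fal qa (nrm y T) ≤ K1fun T θ y qa := by
    rw [K1fun]
    have := neg_le_neg hCS
    linarith
  have hny : 0 ≤ nrm y T := Real.sqrt_nonneg _
  have hpos : 0 ≤ -(nrm y T * nrm θ T) - fal qa (nrm y T) := by
    rcases eq_or_lt_of_le hny with h | h
    · rw [← h]
      exact le_of_eq hzero.symm
    · have hlt := hsmo Set.self_mem_Ici (Set.mem_Ici.2 hny) h
      simp only at hlt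
      linarith [hzero]
  refine ⟨hlower, hpos, ?_, ?_⟩
  · intro hK
    have hkm0 : -(nrm y T * nrm θ T) - fal qa (nrm y T) = 0 :=
      le_antisymm (hK ▸ hlower) hpos
    have hny0 : nrm y T = 0 := by
      by_contra hne
      have h : 0 < nrm y T := lt_of_le_of_ne hny (Ne.symm hne)
      have hlt := hsmo Set.self_mem_Ici (Set.mem_Ici.2 hny) h
      simp only at hlt
      linarith [hzero]
    have hI0 : (∫ t in Set.Ioc (0:ℝ) T, ‖y t‖ ^ 2) = 0 := by
      rw [nrm] at hny0
      exact le_antisymm (Real.sqrt_eq_zero'.1 hny0) hIy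
    have hae := (integral_eq_zero_iff_of_nonneg (fun t => sq_nonneg _) hy2).1 hI0
    filter_upwards [hae] with t ht
    have ht2 : ‖y t‖ ^ 2 = 0 := ht
    have : ‖y t‖ = 0 := by
      have := pow_eq_zero_iff (n := 2) (by norm_num) |>.1 ht2
      exact this
    simpa using norm_eq_zero.1 this
  · intro hy0
    have hipr : ipr y θ T = 0 := by
      rw [ipr]
      have : (∫ s in Set.Ioc (0:ℝ) T, ⟪y s, θ s⟫)
          = ∫ _ in Set.Ioc (0:ℝ) T, (0:ℝ) := by
        refine integral_congr_ae ?_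
        filter_upwards [hy0] with t ht
        simp [ht]
      rw [this, integral_zero]
    have hnyz : nrm y T = 0 := by
      rw [nrm]
      have : (∫ t in Set.Ioc (0:ℝ) T, ‖y t‖ ^ 2)
          = ∫ _ in Set.Ioc (0:ℝ) T, (0:ℝ) := by
        refine integral_congr_ae ?_
        filter_upwards [hy0] with t ht
        simp [ht]
      rw [this, integral_zero, Real.sqrt_zero]
    rw [K1fun, hipr, hnyz, hfal0]
    ring
end
end
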